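/- Let M be a definably complete locally o-minimal structure and let Γ ⊆ M² be a definable set such that every vertical fiber Γ ∩ ({y} × M) is discrete. Let X be the set of points (y, x) ∈ Γ that have an open box neighborhood B with B ∩ Γ equal to the graph of a constant function on π₁(B), where π₁ is the projection to the first coordinate. Then the projection π₂(X) of X to the second coordinate is discrete and closed. -/

import Mathlib

open FirstOrder Set

namespace Paper

variable (L : FirstOrder.Language)

/-- A subset of `Mⁿ` definable with arbitrary parameters from `M`. -/
def Def (M : Type*) [L.Structure M] {n : ℕ} (s : Set (Fin n → M)) : Prop :=
  Set.Definable (Set.univ : Set M) L s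

/-- A subset of `M` definable with arbitrary parameters from `M`. -/
def Def1 (M : Type*) [L.Structure M] (s : Set M) : Prop :=
  Def L M {f : Fin 1 → M | f 0 ∈ s}

/-- A subset of `M × M` definable with arbitrary parameters from `M`. -/
def Def2 (M : Type*) [L.Structure M] (s : Set (M × M)) : Prop :=
  Def L M {f : Fin 2 → M | (f 0, f 1) ∈ s}

/-- A discrete subset of a topological space. -/
def IsDiscrete {X : Type*} [TopologicalSpace X] (s : Set X) : Prop :=
  ∀ x ∈ s, ∃ U : Set X, IsOpen U ∧ x ∈ U ∧ U ∩ s = {x}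

/-- An open interval (with possibly infinite endpoints). -/
def IsOInterval {M : Type*} [Preorder M] (s : Set M) : Prop :=
  (∃ a b : M, s = Set.Ioo a b) ∨ (∃ a, s = Set.Ioi a) ∨ (∃ b, s = Set.Iio b) ∨ s = Set.univ

/-- A finite union of points and open intervals. -/
def FinUnionPtsIntervals {M : Type*} [Preorder M] (s : Set M) : Prop :=
  ∃ (F : Finset M) (n : ℕ) (J : Fin n → Set M),
    (∀ i, IsOInterval (J i)) ∧ s = ↑F ∪ ⋃ i, J i

/-- Local o-minimality. -/
def LocallyOMinimal (M : Type*) [L.Structure M] [LinearOrder M] : Prop :=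
  ∀ s : Set M, Def1 L M s → ∀ a : M,
    ∃ I : Set M, IsOInterval I ∧ a ∈ I ∧ FinUnionPtsIntervals (s ∩ I)

/-- Definable completeness. -/
def DefinablyComplete (M : Type*) [L.Structure M] [LinearOrder M] : Prop :=
  ∀ s : Set M, Def1 L M s → s.Nonempty →
    (BddAbove s → ∃ a, IsLUB s a) ∧ (BddBelow s → ∃ a, IsGLB s a)

/-- A coordinate projection of `X ⊆ Mⁿ` to `M^d` has image with nonempty interior. -/
def HasDimWit {M : Type*} [TopologicalSpace M] {n : ℕ} (X : Set (Fin n → M)) (d : ℕ) : Prop :=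
  ∃ σ : Fin d ↪ Fin n, (interior ((fun x => x ∘ σ) '' X)).Nonempty

/-- The projection dimension of a subset of `Mⁿ`, with `projDim ∅ = ⊥ = -∞`. -/
noncomputable def projDim {M : Type*} [TopologicalSpace M] {n : ℕ}
    (X : Set (Fin n → M)) : WithBot ℕ∞ :=
  ⨆ d ∈ {d : ℕ | HasDimWit X d}, ((d : ℕ∞) : WithBot ℕ∞)

/-- The discrete closure of `A ⊆ M`. -/
def discl (M : Type*) [L.Structure M] [TopologicalSpace M] (A : Set M) : Set M :=
  {x | ∃ s : Set M, Set.Definable A L {f : Fin 1 → M | f 0 ∈ s} ∧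
    IsDiscrete s ∧ IsClosed s ∧ x ∈ s}


end Paper

open Paper

namespace PaperProof

/-- Formulas over base unary/binary relations, with constants from `M`. -/
inductive Fm (M : Type*) (B1 B2 : ℕ) : ℕ → Type _ where
  | le {k} (i j : Fin k) : Fm M B1 B2 k
  | leC {k} (i : Fin k) (m : M) : Fm M B1 B2 k
  | geC {k} (i : Fin k) (m : M) : Fm M B1 B2 k
  | un {k} (b : Fin B1) (i : Fin k) : Fm M B1 B2 k
  | bin {k} (b : Fin B2) (i j : Fin k) : Fm M B1 B2 k
  | not {k} (φ : Fm M B1 B2 k) : Fm M B1 B2 k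
  | and {k} (φ ψ : Fm M B1 B2 k) : Fm M B1 B2 k
  | ex {k} (φ : Fm M B1 B2 (k+1)) : Fm M B1 B2 k

namespace Fm

variable {M : Type*} [LinearOrder M] {B1 B2 : ℕ}

def realize (ρ1 : Fin B1 → Set M) (ρ2 : Fin B2 → Set (M × M)) :
    ∀ {k}, Fm M B1 B2 k → (Fin k → M) → Prop
  | _, .le i j, v => v i ≤ v j
  | _, .leC i m, v => v i ≤ m
  | _, .geC i m, v => m ≤ v i
  | _, .un b i, v => v i ∈ ρ1 b
  | _, .bin b i j, v => (v i, v j) ∈ ρ2 b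
  | _, .not φ, v => ¬ realize ρ1 ρ2 φ v
  | _, .and φ ψ, v => realize ρ1 ρ2 φ v ∧ realize ρ1 ρ2 ψ v
  | _, .ex φ, v => ∃ a, realize ρ1 ρ2 φ (Fin.cons a v)

variable {ρ1 : Fin B1 → Set M} {ρ2 : Fin B2 → Set (M × M)}

@[simp] lemma realize_le {k} (i j : Fin k) (v) :
    realize ρ1 ρ2 (.le i j : Fm M B1 B2 k) v ↔ v i ≤ v j := Iff.rfl
@[simp] lemma realize_leC {k} (i : Fin k) (m : M) (v) :
    realize ρ1 ρ2 (.leC i m : Fm M B1 B2 k) v ↔ v i ≤ m := Iff.rfl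
@[simp] lemma realize_geC {k} (i : Fin k) (m : M) (v) :
    realize ρ1 ρ2 (.geC i m : Fm M B1 B2 k) v ↔ m ≤ v i := Iff.rfl
@[simp] lemma realize_un {k} (b) (i : Fin k) (v) :
    realize ρ1 ρ2 (.un b i : Fm M B1 B2 k) v ↔ v i ∈ ρ1 b := Iff.rfl
@[simp] lemma realize_bin {k} (b) (i j : Fin k) (v) :
    realize ρ1 ρ2 (.bin b i j : Fm M B1 B2 k) v ↔ (v i, v j) ∈ ρ2 b := Iff.rfl
@[simp] lemma realize_not {k} (φ : Fm M B1 B2 k) (v) :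
    realize ρ1 ρ2 (.not φ) v ↔ ¬ realize ρ1 ρ2 φ v := Iff.rfl
@[simp] lemma realize_and {k} (φ ψ : Fm M B1 B2 k) (v) :
    realize ρ1 ρ2 (.and φ ψ) v ↔ realize ρ1 ρ2 φ v ∧ realize ρ1 ρ2 ψ v := Iff.rfl
@[simp] lemma realize_ex {k} (φ : Fm M B1 B2 (k+1)) (v) :
    realize ρ1 ρ2 (.ex φ) v ↔ ∃ a, realize ρ1 ρ2 φ (Fin.cons a v) := Iff.rfl

def or {k} (φ ψ : Fm M B1 B2 k) : Fm M B1 B2 k := Fm.not ((Fm.not φ).and (Fm.not ψ))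
def imp {k} (φ ψ : Fm M B1 B2 k) : Fm M B1 B2 k := Fm.not (φ.and (Fm.not ψ))
def all {k} (φ : Fm M B1 B2 (k+1)) : Fm M B1 B2 k := Fm.not (Fm.ex (Fm.not φ))
def lt {k} (i j : Fin k) : Fm M B1 B2 k := Fm.not (Fm.le j i)
def ltC {k} (i : Fin k) (m : M) : Fm M B1 B2 k := Fm.not (Fm.geC i m)
def gtC {k} (i : Fin k) (m : M) : Fm M B1 B2 k := Fm.not (Fm.leC i m)
def eq {k} (i j : Fin k) : Fm M B1 B2 k := (Fm.le i j).and (Fm.le j i)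

@[simp] lemma realize_or {k} (φ ψ : Fm M B1 B2 k) (v) :
    realize ρ1 ρ2 (φ.or ψ) v ↔ realize ρ1 ρ2 φ v ∨ realize ρ1 ρ2 ψ v := by
  simp only [or, realize_not, realize_and]; tauto

@[simp] lemma realize_imp {k} (φ ψ : Fm M B1 B2 k) (v) :
    realize ρ1 ρ2 (φ.imp ψ) v ↔ (realize ρ1 ρ2 φ v → realize ρ1 ρ2 ψ v) := by
  simp only [imp, realize_not, realize_and]; tauto

@[simp] lemma realize_all {k} (φ : Fm M B1 B2 (k+1)) (v) :
    realize ρ1 ρ2 (all φ) v ↔ ∀ a, realize ρ1 ρ2 φ (Fin.cons a v) := by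
  simp only [all, realize_not, realize_ex]; push_neg; rfl

@[simp] lemma realize_lt {k} (i j : Fin k) (v : Fin k → M) :
    realize ρ1 ρ2 (lt i j : Fm M B1 B2 k) v ↔ v i < v j := by
  simp only [lt, realize_not, realize_le]; exact not_le

@[simp] lemma realize_ltC {k} (i : Fin k) (m : M) (v : Fin k → M) :
    realize ρ1 ρ2 (ltC i m : Fm M B1 B2 k) v ↔ v i < m := by
  simp only [ltC, realize_not, realize_geC]; exact not_le

@[simp] lemma realize_gtC {k} (i : Fin k) (m : M) (v : Fin k → M) :
    realize ρ1 ρ2 (gtC i m : Fm M B1 B2 k) v ↔ m < v i := by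
  simp only [gtC, realize_not, realize_leC]; exact not_le

@[simp] lemma realize_eq {k} (i j : Fin k) (v : Fin k → M) :
    realize ρ1 ρ2 (eq i j : Fm M B1 B2 k) v ↔ v i = v j := by
  simp only [eq, realize_and, realize_le]; exact le_antisymm_iff.symm

def eqC {k} (i : Fin k) (m : M) : Fm M B1 B2 k := (Fm.leC i m).and (Fm.geC i m)

@[simp] lemma realize_eqC {k} (i : Fin k) (m : M) (v : Fin k → M) :
    realize ρ1 ρ2 (eqC i m : Fm M B1 B2 k) v ↔ v i = m := by
  simp only [eqC, realize_and, realize_leC, realize_geC]; exact le_antisymm_iff.symm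


def binCr {k} (b : Fin B2) (i : Fin k) (m : M) : Fm M B1 B2 k :=
  Fm.ex ((Fm.eqC 0 m).and (Fm.bin b i.succ 0))

@[simp] lemma realize_binCr {k} (b : Fin B2) (i : Fin k) (m : M) (v : Fin k → M) :
    realize ρ1 ρ2 (binCr b i m) v ↔ (v i, m) ∈ ρ2 b := by
  simp only [binCr, realize_ex, realize_and, realize_eqC, realize_bin, Fin.cons_zero,
    Fin.cons_succ]
  exact ⟨fun ⟨a, h1, h2⟩ => h1 ▸ h2, fun h => ⟨m, rfl, h⟩⟩

def binCl {k} (b : Fin B2) (i : Fin k) (m : M) : Fm M B1 B2 k :=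
  Fm.ex ((Fm.eqC 0 m).and (Fm.bin b 0 i.succ))

@[simp] lemma realize_binCl {k} (b : Fin B2) (i : Fin k) (m : M) (v : Fin k → M) :
    realize ρ1 ρ2 (binCl b i m) v ↔ (m, v i) ∈ ρ2 b := by
  simp only [binCl, realize_ex, realize_and, realize_eqC, realize_bin, Fin.cons_zero,
    Fin.cons_succ]
  exact ⟨fun ⟨a, h1, h2⟩ => h1 ▸ h2, fun h => ⟨m, rfl, h⟩⟩


end Fm

section Toolkit

variable {L : FirstOrder.Language} {M : Type*} [L.IsOrdered] [LinearOrder M] [L.Structure M]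
    [L.OrderedStructure M]

lemma dfn_ofFormula {n : ℕ} (φ : L.Formula ((univ : Set M) ⊕ Fin n)) :
    Set.Definable (univ : Set M) L {v : Fin n → M | φ.Realize (Sum.elim (↑) v)} :=
  Set.definable_iff_exists_formula_sum.mpr ⟨φ, rfl⟩

lemma dfn_le {n : ℕ} (i j : Fin n) :
    Set.Definable (univ : Set M) L {v : Fin n → M | v i ≤ v j} := by
  have := dfn_ofFormula (L := L) (M := M) (n := n)
    ((Language.leSymb (L := L)).formula₂ (Language.Term.var (Sum.inr i))
      (Language.Term.var (Sum.inr j)))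
  convert this using 1
  ext v
  simp [Language.Formula.realize_rel₂]

lemma dfn_leC {n : ℕ} (i : Fin n) (m : M) :
    Set.Definable (univ : Set M) L {v : Fin n → M | v i ≤ m} := by
  have := dfn_ofFormula (L := L) (M := M) (n := n)
    ((Language.leSymb (L := L)).formula₂ (Language.Term.var (Sum.inr i))
      (Language.Term.var (Sum.inl ⟨m, mem_univ m⟩)))
  convert this using 1
  ext v
  simp [Language.Formula.realize_rel₂]

lemma dfn_geC {n : ℕ} (i : Fin n) (m : M) :
    Set.Definable (univ : Set M) L {v : Fin n → M | m ≤ v i} := by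
  have := dfn_ofFormula (L := L) (M := M) (n := n)
    ((Language.leSymb (L := L)).formula₂ (Language.Term.var (Sum.inl ⟨m, mem_univ m⟩))
      (Language.Term.var (Sum.inr i)))
  convert this using 1
  ext v
  simp [Language.Formula.realize_rel₂]

lemma dfn_mem {m n : ℕ} {s : Set (Fin m → M)} (hs : Set.Definable (univ : Set M) L s)
    (f : Fin m → Fin n) :
    Set.Definable (univ : Set M) L {v : Fin n → M | v ∘ f ∈ s} :=
  hs.preimage_comp f

lemma dfn_ex {n : ℕ} {s : Set (Fin (n+1) → M)} (hs : Set.Definable (univ : Set M) L s) :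
    Set.Definable (univ : Set M) L {v : Fin n → M | ∃ y, Fin.cons y v ∈ s} := by
  have h := hs.image_comp (Fin.succ : Fin n → Fin (n+1))
  convert h using 1
  ext v
  constructor
  · rintro ⟨y, hy⟩
    exact ⟨Fin.cons y v, hy, by ext i; simp [Fin.cons_succ, Function.comp]⟩
  · rintro ⟨g, hg, rfl⟩
    refine ⟨g 0, ?_⟩
    have h2 : Fin.cons (g 0) ((fun g₀ : Fin (n+1) → M => g₀ ∘ Fin.succ) g) = g :=
      Fin.cons_self_tail g
    rwa [h2]

/-- The master definability lemma : every `Fm`-definable set is definable. -/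
lemma dfn_realize {B1 B2 : ℕ} {ρ1 : Fin B1 → Set M} {ρ2 : Fin B2 → Set (M × M)}
    (h1 : ∀ b, Def1 L M (ρ1 b)) (h2 : ∀ b, Def2 L M (ρ2 b)) :
    ∀ {k} (φ : Fm M B1 B2 k),
      Set.Definable (univ : Set M) L {v : Fin k → M | Fm.realize ρ1 ρ2 φ v}
  | _, .le i j => dfn_le i j
  | _, .leC i m => dfn_leC i m
  | _, .geC i m => dfn_geC i m
  | _, .un b i => dfn_mem (L := L) (h1 b) (fun _ : Fin 1 => i)
  | _, .bin b i j => dfn_mem (L := L) (h2 b) (![i, j])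
  | _, .not φ => (dfn_realize h1 h2 φ).compl
  | _, .and φ ψ => (dfn_realize h1 h2 φ).inter (dfn_realize h1 h2 ψ)
  | _, .ex φ => dfn_ex (dfn_realize h1 h2 φ)

end Toolkit



section C
variable {L : FirstOrder.Language} {M : Type*} [L.IsOrdered] [LinearOrder M] [L.Structure M]
    [L.OrderedStructure M] [DenselyOrdered M] [NoMaxOrder M] [NoMinOrder M]
    [TopologicalSpace M] [OrderTopology M]

/-- `s` contains no nonempty open interval. -/
def NoInt (s : Set M) : Prop := ∀ a b : M, a < b → ¬ Ioo a b ⊆ s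

/-- `x` is an accumulation point of `s`. -/
def IsAcc (x : M) (s : Set M) : Prop :=
  ∀ a b : M, a < x → x < b → ∃ w ∈ s, w ≠ x ∧ a < w ∧ w < b

lemma oint_sub_Ioo {I : Set M} (hI : IsOInterval I) {x} (hx : x ∈ I) :
    ∃ a b, a < x ∧ x < b ∧ Ioo a b ⊆ I := by
  rcases hI with ⟨a,b,rfl⟩|⟨a,rfl⟩|⟨b,rfl⟩|rfl
  · exact ⟨a, b, hx.1, hx.2, Subset.rfl⟩
  · obtain ⟨b, hb⟩ := exists_gt x; exact ⟨a, b, hx, hb, fun w hw => hw.1⟩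
  · obtain ⟨a, ha⟩ := exists_lt x; exact ⟨a, b, ha, hx, fun w hw => hw.2⟩
  · obtain ⟨b, hb⟩ := exists_gt x; obtain ⟨a, ha⟩ := exists_lt x
    exact ⟨a, b, ha, hb, subset_univ _⟩

lemma oint_nonempty_Ioo {s : Set M} (hs : IsOInterval s) (hne : s.Nonempty) :
    ∃ a b, a < b ∧ Ioo a b ⊆ s := by
  obtain ⟨x, hx⟩ := hne
  obtain ⟨a, b, hax, hxb, hsub⟩ := oint_sub_Ioo hs hx
  exact ⟨a, b, hax.trans hxb, hsub⟩


/-- T2 : a definable set with an accumulation point contains an interval. -/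
lemma t2 (hlo : LocallyOMinimal L M) {s : Set M} (hs : Def1 L M s) {x : M} (hx : IsAcc x s) :
    ∃ a b : M, a < b ∧ Ioo a b ⊆ s := by
  classical
  obtain ⟨I, hI, hxI, F, n, J, hJ, hsI⟩ := hlo s hs x
  by_cases hJne : ∃ i, (J i).Nonempty
  · obtain ⟨i, hi⟩ := hJne
    obtain ⟨a, b, hab, hsub⟩ := oint_nonempty_Ioo (hJ i) hi
    refine ⟨a, b, hab, fun w hw => ?_⟩
    have : w ∈ s ∩ I := by rw [hsI]; exact Or.inr (mem_iUnion.2 ⟨i, hsub hw⟩)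
    exact this.1
  · push_neg at hJne
    have hFin : s ∩ I ⊆ (↑F : Set M) := by
      rw [hsI]; rintro w (h|h)
      · exact h
      · obtain ⟨i, hi⟩ := mem_iUnion.1 h
        simp [hJne i] at hi
    obtain ⟨a₀, b₀, ha₀x, hxb₀, hIoo⟩ := oint_sub_Ioo hI hxI
    set Fb := F.filter (fun w => a₀ < w ∧ w < x) with hFbdef
    have ha : ∃ a, a₀ ≤ a ∧ a < x ∧ ∀ w ∈ Fb, w ≤ a := by
      by_cases h : Fb.Nonempty
      · have hm := Finset.mem_filter.1 (Fb.max'_mem h)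
        exact ⟨Fb.max' h, le_of_lt hm.2.1, hm.2.2, fun w hw => Finset.le_max' _ _ hw⟩
      · obtain ⟨a, ha1, ha2⟩ := exists_between ha₀x
        exact ⟨a, le_of_lt ha1, ha2, fun w hw => absurd ⟨w, hw⟩ h⟩
    set Ft := F.filter (fun w => x < w ∧ w < b₀) with hFtdef
    have hb : ∃ b, b ≤ b₀ ∧ x < b ∧ ∀ w ∈ Ft, b ≤ w := by
      by_cases h : Ft.Nonempty
      · have hm := Finset.mem_filter.1 (Ft.min'_mem h)
        exact ⟨Ft.min' h, le_of_lt hm.2.2, hm.2.1, fun w hw => Finset.min'_le _ _ hw⟩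
      · obtain ⟨b, hb1, hb2⟩ := exists_between hxb₀
        exact ⟨b, le_of_lt hb2, hb1, fun w hw => absurd ⟨w, hw⟩ h⟩
    obtain ⟨a, haa₀, hax, hFa⟩ := ha
    obtain ⟨b, hbb₀, hxb, hFb⟩ := hb
    obtain ⟨w, hws, hwne, haw, hwb⟩ := hx a b hax hxb
    have hwI : w ∈ I := hIoo ⟨lt_of_le_of_lt haa₀ haw, lt_of_lt_of_le hwb hbb₀⟩
    have hwF : w ∈ F := by exact_mod_cast hFin ⟨hws, hwI⟩
    rcases lt_or_gt_of_ne hwne with h | h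
    · have : w ∈ Fb := Finset.mem_filter.2 ⟨hwF, lt_of_le_of_lt haa₀ haw, h⟩
      exact absurd (hFa w this) (not_le.2 haw)
    · have : w ∈ Ft := Finset.mem_filter.2 ⟨hwF, h, lt_of_lt_of_le hwb hbb₀⟩
      exact absurd (hFb w this) (not_le.2 hwb)

lemma noAcc (hlo : LocallyOMinimal L M) {s : Set M} (hs : Def1 L M s) (hni : NoInt s) (x : M) : ¬ IsAcc x s := by
  intro h
  obtain ⟨a, b, hab, hsub⟩ := t2 hlo hs h
  exact hni a b hab hsub

lemma not_acc_elim {s : Set M} {x : M} (h : ¬ IsAcc x s) :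
    ∃ a b, a < x ∧ x < b ∧ ∀ w ∈ s, a < w → w < b → w = x := by
  unfold IsAcc at h; push_neg at h
  obtain ⟨a, b, hax, hxb, h⟩ := h
  refine ⟨a, b, hax, hxb, fun w hw h1 h2 => ?_⟩
  by_contra hne
  exact absurd (h w hw hne h1) (not_le.2 h2)

lemma exists_least (hlo : LocallyOMinimal L M) (hdc : DefinablyComplete L M) {s : Set M} (hs : Def1 L M s) (hni : NoInt s) (hne : s.Nonempty)
    (hbd : BddBelow s) : ∃ m, IsLeast s m := by
  obtain ⟨z, hz⟩ := (hdc s hs hne).2 hbd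
  refine ⟨z, ?_, hz.1⟩
  by_contra hzs
  refine noAcc hlo hs hni z (fun a b haz hzb => ?_)
  have hnb : b ∉ lowerBounds s := fun h => absurd (hz.2 h) (not_le.2 hzb)
  obtain ⟨w, hws, hwb⟩ : ∃ w ∈ s, w < b := by
    by_contra h; push_neg at h; exact hnb (fun w hw => (h w hw))
  exact ⟨w, hws, fun h => hzs (h ▸ hws), lt_of_lt_of_le haz (hz.1 hws), hwb⟩

lemma exists_greatest (hlo : LocallyOMinimal L M) (hdc : DefinablyComplete L M) {s : Set M} (hs : Def1 L M s) (hni : NoInt s) (hne : s.Nonempty)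
    (hbd : BddAbove s) : ∃ m, IsGreatest s m := by
  obtain ⟨z, hz⟩ := (hdc s hs hne).1 hbd
  refine ⟨z, ?_, hz.1⟩
  by_contra hzs
  refine noAcc hlo hs hni z (fun a b haz hzb => ?_)
  have hnb : a ∉ upperBounds s := fun h => absurd (hz.2 h) (not_le.2 haz)
  obtain ⟨w, hws, hwb⟩ : ∃ w ∈ s, a < w := by
    by_contra h; push_neg at h; exact hnb (fun w hw => (h w hw))
  exact ⟨w, hws, fun h => hzs (h ▸ hws), hwb, lt_of_le_of_lt (hz.1 hws) hzb⟩

lemma noInt_empty : NoInt (∅ : Set M) := by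
  intro a b hab hsub
  obtain ⟨x, hx⟩ := nonempty_Ioo.2 hab
  exact hsub hx

lemma noInt_subset {s t : Set M} (hst : s ⊆ t) (ht : NoInt t) : NoInt s :=
  fun a b hab hsub => ht a b hab (hsub.trans hst)

lemma noInt_discrete {s : Set M} (h : Paper.IsDiscrete s) : NoInt s := by
  intro a b hab hsub
  obtain ⟨x, hx⟩ := nonempty_Ioo.2 hab
  obtain ⟨U, hU, hxU, hUs⟩ := h x (hsub hx)
  obtain ⟨l, u, hxlu, hlu⟩ := mem_nhds_iff_exists_Ioo_subset.1 (hU.mem_nhds hxU)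
  have hmax : max l a < x := max_lt hxlu.1 hx.1
  obtain ⟨w, hw1, hw2⟩ := exists_between hmax
  have hwU : w ∈ U := hlu ⟨lt_of_le_of_lt (le_max_left _ _) hw1, hw2.trans hxlu.2⟩
  have hws : w ∈ s := hsub ⟨lt_of_le_of_lt (le_max_right _ _) hw1, hw2.trans hx.2⟩
  have : w ∈ ({x} : Set M) := hUs ▸ (⟨hwU, hws⟩ : w ∈ U ∩ s)
  exact absurd this (by simpa using ne_of_lt hw2)

lemma sub_avoid (hlo : LocallyOMinimal L M) {s : Set M} (hs : Def1 L M s) (hni : NoInt s) {a b : M} (hab : a < b) :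
    ∃ a' b', a' < b' ∧ Ioo a' b' ⊆ Ioo a b ∧ ∀ w ∈ Ioo a' b', w ∉ s := by
  obtain ⟨x, hx⟩ := nonempty_Ioo.2 hab
  obtain ⟨a₁, b₁, ha₁, hb₁, hcl⟩ := not_acc_elim (noAcc hlo hs hni x)
  refine ⟨max a a₁, x, max_lt hx.1 ha₁, fun w hw =>
    ⟨lt_of_le_of_lt (le_max_left _ _) hw.1, hw.2.trans hx.2⟩, fun w hw hws => ?_⟩
  have := hcl w hws (lt_of_le_of_lt (le_max_right _ _) hw.1) (hw.2.trans hb₁)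
  exact absurd this (ne_of_lt hw.2)

end C

section ConsEval
variable {α : Type*}

@[simp] lemma cons_eval_1_1 (a : α) (v : Fin 1 → α) : (Fin.cons a v : Fin 2 → α) (1 : Fin 2) = v 0 := rfl
@[simp] lemma cons_eval_2_1 (a : α) (v : Fin 2 → α) : (Fin.cons a v : Fin 3 → α) (1 : Fin 3) = v 0 := rfl
@[simp] lemma cons_eval_2_2 (a : α) (v : Fin 2 → α) : (Fin.cons a v : Fin 3 → α) (2 : Fin 3) = v 1 := rfl
@[simp] lemma cons_eval_3_1 (a : α) (v : Fin 3 → α) : (Fin.cons a v : Fin 4 → α) (1 : Fin 4) = v 0 := rfl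
@[simp] lemma cons_eval_3_2 (a : α) (v : Fin 3 → α) : (Fin.cons a v : Fin 4 → α) (2 : Fin 4) = v 1 := rfl
@[simp] lemma cons_eval_3_3 (a : α) (v : Fin 3 → α) : (Fin.cons a v : Fin 4 → α) (3 : Fin 4) = v 2 := rfl
@[simp] lemma cons_eval_4_1 (a : α) (v : Fin 4 → α) : (Fin.cons a v : Fin 5 → α) (1 : Fin 5) = v 0 := rfl
@[simp] lemma cons_eval_4_2 (a : α) (v : Fin 4 → α) : (Fin.cons a v : Fin 5 → α) (2 : Fin 5) = v 1 := rfl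
@[simp] lemma cons_eval_4_3 (a : α) (v : Fin 4 → α) : (Fin.cons a v : Fin 5 → α) (3 : Fin 5) = v 2 := rfl
@[simp] lemma cons_eval_4_4 (a : α) (v : Fin 4 → α) : (Fin.cons a v : Fin 5 → α) (4 : Fin 5) = v 3 := rfl
@[simp] lemma cons_eval_5_1 (a : α) (v : Fin 5 → α) : (Fin.cons a v : Fin 6 → α) (1 : Fin 6) = v 0 := rfl
@[simp] lemma cons_eval_5_2 (a : α) (v : Fin 5 → α) : (Fin.cons a v : Fin 6 → α) (2 : Fin 6) = v 1 := rfl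
@[simp] lemma cons_eval_5_3 (a : α) (v : Fin 5 → α) : (Fin.cons a v : Fin 6 → α) (3 : Fin 6) = v 2 := rfl
@[simp] lemma cons_eval_5_4 (a : α) (v : Fin 5 → α) : (Fin.cons a v : Fin 6 → α) (4 : Fin 6) = v 3 := rfl
@[simp] lemma cons_eval_5_5 (a : α) (v : Fin 5 → α) : (Fin.cons a v : Fin 6 → α) (5 : Fin 6) = v 4 := rfl
@[simp] lemma cons_eval_6_1 (a : α) (v : Fin 6 → α) : (Fin.cons a v : Fin 7 → α) (1 : Fin 7) = v 0 := rfl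
@[simp] lemma cons_eval_6_2 (a : α) (v : Fin 6 → α) : (Fin.cons a v : Fin 7 → α) (2 : Fin 7) = v 1 := rfl
@[simp] lemma cons_eval_6_3 (a : α) (v : Fin 6 → α) : (Fin.cons a v : Fin 7 → α) (3 : Fin 7) = v 2 := rfl
@[simp] lemma cons_eval_6_4 (a : α) (v : Fin 6 → α) : (Fin.cons a v : Fin 7 → α) (4 : Fin 7) = v 3 := rfl
@[simp] lemma cons_eval_6_5 (a : α) (v : Fin 6 → α) : (Fin.cons a v : Fin 7 → α) (5 : Fin 7) = v 4 := rfl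
@[simp] lemma cons_eval_6_6 (a : α) (v : Fin 6 → α) : (Fin.cons a v : Fin 7 → α) (6 : Fin 7) = v 5 := rfl
@[simp] lemma cons_eval_7_1 (a : α) (v : Fin 7 → α) : (Fin.cons a v : Fin 8 → α) (1 : Fin 8) = v 0 := rfl
@[simp] lemma cons_eval_7_2 (a : α) (v : Fin 7 → α) : (Fin.cons a v : Fin 8 → α) (2 : Fin 8) = v 1 := rfl
@[simp] lemma cons_eval_7_3 (a : α) (v : Fin 7 → α) : (Fin.cons a v : Fin 8 → α) (3 : Fin 8) = v 2 := rfl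
@[simp] lemma cons_eval_7_4 (a : α) (v : Fin 7 → α) : (Fin.cons a v : Fin 8 → α) (4 : Fin 8) = v 3 := rfl
@[simp] lemma cons_eval_7_5 (a : α) (v : Fin 7 → α) : (Fin.cons a v : Fin 8 → α) (5 : Fin 8) = v 4 := rfl
@[simp] lemma cons_eval_7_6 (a : α) (v : Fin 7 → α) : (Fin.cons a v : Fin 8 → α) (6 : Fin 8) = v 5 := rfl
@[simp] lemma cons_eval_7_7 (a : α) (v : Fin 7 → α) : (Fin.cons a v : Fin 8 → α) (7 : Fin 8) = v 6 := rfl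
@[simp] lemma cons_eval_8_1 (a : α) (v : Fin 8 → α) : (Fin.cons a v : Fin 9 → α) (1 : Fin 9) = v 0 := rfl
@[simp] lemma cons_eval_8_2 (a : α) (v : Fin 8 → α) : (Fin.cons a v : Fin 9 → α) (2 : Fin 9) = v 1 := rfl
@[simp] lemma cons_eval_8_3 (a : α) (v : Fin 8 → α) : (Fin.cons a v : Fin 9 → α) (3 : Fin 9) = v 2 := rfl
@[simp] lemma cons_eval_8_4 (a : α) (v : Fin 8 → α) : (Fin.cons a v : Fin 9 → α) (4 : Fin 9) = v 3 := rfl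
@[simp] lemma cons_eval_8_5 (a : α) (v : Fin 8 → α) : (Fin.cons a v : Fin 9 → α) (5 : Fin 9) = v 4 := rfl
@[simp] lemma cons_eval_8_6 (a : α) (v : Fin 8 → α) : (Fin.cons a v : Fin 9 → α) (6 : Fin 9) = v 5 := rfl
@[simp] lemma cons_eval_8_7 (a : α) (v : Fin 8 → α) : (Fin.cons a v : Fin 9 → α) (7 : Fin 9) = v 6 := rfl
@[simp] lemma cons_eval_8_8 (a : α) (v : Fin 8 → α) : (Fin.cons a v : Fin 9 → α) (8 : Fin 9) = v 7 := rfl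
@[simp] lemma vec1_eval0 (x : α) : (![x] : Fin 1 → α) 0 = x := rfl
@[simp] lemma vec2_eval0 (x y : α) : (![x, y] : Fin 2 → α) 0 = x := rfl
@[simp] lemma vec2_eval1 (x y : α) : (![x, y] : Fin 2 → α) 1 = y := rfl

end ConsEval

section Interface
variable {L : FirstOrder.Language} {M : Type*} [L.IsOrdered] [LinearOrder M] [L.Structure M]
    [L.OrderedStructure M]

lemma def1_of_fm {B1 B2 : ℕ} {ρ1 : Fin B1 → Set M} {ρ2 : Fin B2 → Set (M × M)}
    (h1 : ∀ b, Def1 L M (ρ1 b)) (h2 : ∀ b, Def2 L M (ρ2 b)) (φ : Fm M B1 B2 1) {S : Set M}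
    (h : ∀ x : M, x ∈ S ↔ Fm.realize ρ1 ρ2 φ ![x]) : Def1 L M S := by
  have e : {v : Fin 1 → M | v 0 ∈ S} = {v : Fin 1 → M | Fm.realize ρ1 ρ2 φ v} := by
    ext v
    have hv : ![v 0] = v := by ext i; fin_cases i; rfl
    rw [mem_setOf_eq, mem_setOf_eq, h (v 0), hv]
  show Set.Definable _ _ _
  rw [show {f : Fin 1 → M | f 0 ∈ S} = _ from e]
  exact dfn_realize h1 h2 φ

lemma def2_of_fm {B1 B2 : ℕ} {ρ1 : Fin B1 → Set M} {ρ2 : Fin B2 → Set (M × M)}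
    (h1 : ∀ b, Def1 L M (ρ1 b)) (h2 : ∀ b, Def2 L M (ρ2 b)) (φ : Fm M B1 B2 2) {S : Set (M × M)}
    (h : ∀ x y : M, (x, y) ∈ S ↔ Fm.realize ρ1 ρ2 φ ![x, y]) : Def2 L M S := by
  have e : {v : Fin 2 → M | (v 0, v 1) ∈ S} = {v : Fin 2 → M | Fm.realize ρ1 ρ2 φ v} := by
    ext v
    have hv : ![v 0, v 1] = v := by ext i; fin_cases i <;> rfl
    rw [mem_setOf_eq, mem_setOf_eq, h (v 0) (v 1), hv]
  show Set.Definable _ _ _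
  rw [show {f : Fin 2 → M | (f 0, f 1) ∈ S} = _ from e]
  exact dfn_realize h1 h2 φ

lemma def2_fiber_fst {R : Set (M × M)} (hR : Def2 L M R) (t : M) :
    Def1 L M {x | (t, x) ∈ R} := by
  refine def1_of_fm (ρ1 := ![]) (ρ2 := ![R]) (fun b => b.elim0) (fun b => by fin_cases b <;> exact hR)
    (Fm.ex ((Fm.eqC 0 t).and (Fm.bin 0 0 1))) (fun x => ?_)
  simp only [Fm.realize_ex, Fm.realize_and, Fm.realize_eqC, Fm.realize_bin, Fin.cons_zero,
    cons_eval_1_1, vec1_eval0, mem_setOf_eq]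
  exact ⟨fun hx => ⟨t, rfl, hx⟩, fun ⟨a, ha, hx⟩ => ha ▸ hx⟩

lemma def2_fiber_snd {R : Set (M × M)} (hR : Def2 L M R) (t : M) :
    Def1 L M {x | (x, t) ∈ R} := by
  refine def1_of_fm (ρ1 := ![]) (ρ2 := ![R]) (fun b => b.elim0) (fun b => by fin_cases b <;> exact hR)
    (Fm.ex ((Fm.eqC 0 t).and (Fm.bin 0 1 0))) (fun x => ?_)
  simp only [Fm.realize_ex, Fm.realize_and, Fm.realize_eqC, Fm.realize_bin, Fin.cons_zero,
    cons_eval_1_1, vec1_eval0, mem_setOf_eq]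
  exact ⟨fun hx => ⟨t, rfl, hx⟩, fun ⟨a, ha, hx⟩ => ha ▸ hx⟩

end Interface


section KL
variable {L : FirstOrder.Language} {M : Type*} [L.IsOrdered] [LinearOrder M] [L.Structure M]
    [L.OrderedStructure M] [DenselyOrdered M] [NoMaxOrder M] [NoMinOrder M]
    [TopologicalSpace M] [OrderTopology M]

/-- The increasing-union-of-uniformly-discrete-sets lemma. -/
lemma KL (hlo : LocallyOMinimal L M) (hdc : DefinablyComplete L M)
    {R : Set (M × M)} (hR : Def2 L M R) {c d : M} (hcd : c < d)
    (hsub : ∀ t x, (t, x) ∈ R → x ∈ Ioo c d)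
    (hni : ∀ t, NoInt {x | (t, x) ∈ R})
    (hmono : ∀ t t', t ≤ t' → (∃ x₀, (t, x₀) ∈ R) → ∀ x, (t', x) ∈ R → (t, x) ∈ R)
    (hcov : ∀ x ∈ Ioo c d, ∃ t, (t, x) ∈ R) : False := by
  classical
  have hlst : ∀ t x₀, (t, x₀) ∈ R → ∃ m, IsLeast {x | (t, x) ∈ R} m := fun t x₀ h0 =>
    exists_least hlo hdc (def2_fiber_fst hR t) (hni t) ⟨x₀, h0⟩
      ⟨c, fun x hx => le_of_lt (hsub t x hx).1⟩
  set K : Set M := {x | ∃ t, (t, x) ∈ R ∧ ∀ x', (t, x') ∈ R → x ≤ x'} with hK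
  have hKdef : Def1 L M K := by
    refine def1_of_fm (ρ1 := ![]) (ρ2 := ![R]) (fun b => b.elim0)
      (fun b => by fin_cases b <;> exact hR)
      (Fm.ex ((Fm.bin 0 0 1).and (Fm.all ((Fm.bin 0 1 0).imp (Fm.le 2 0))))) (fun x => ?_)
    simp only [hK, Fm.realize_ex, Fm.realize_and, Fm.realize_bin, Fm.realize_all,
      Fm.realize_imp, Fm.realize_le, Fin.cons_zero, cons_eval_1_1, cons_eval_2_1, cons_eval_2_2,
      vec1_eval0, mem_setOf_eq]
  have hKsub : ∀ x ∈ K, x ∈ Ioo c d := fun x hx => hsub hx.choose x hx.choose_spec.1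
  have h4a : ∀ x ∈ Ioo c d, ∃ w ∈ K, w ≤ x := by
    intro x hx
    obtain ⟨t, ht⟩ := hcov x hx
    obtain ⟨m, hm⟩ := hlst t x ht
    exact ⟨m, ⟨t, hm.1, fun x' h => hm.2 h⟩, hm.2 ht⟩
  have hacc : IsAcc c K := by
    intro a b hac hcb
    obtain ⟨x, hx1, hx2⟩ := exists_between (lt_min hcb hcd)
    have hxI : x ∈ Ioo c d := ⟨hx1, lt_of_lt_of_le hx2 (min_le_right _ _)⟩
    obtain ⟨w, hwK, hwx⟩ := h4a x hxI
    exact ⟨w, hwK, ne_of_gt (hKsub w hwK).1, hac.trans (hKsub w hwK).1,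
      lt_of_le_of_lt hwx (lt_of_lt_of_le hx2 (min_le_left _ _))⟩
  obtain ⟨p, q, hpq, hPQ⟩ := t2 hlo hKdef hacc
  obtain ⟨x₀, hx₀⟩ := nonempty_Ioo.2 hpq
  have hx₀K : x₀ ∈ K := hPQ hx₀
  obtain ⟨t₀, ht₀R, ht₀lb⟩ := hx₀K
  have hx₀I : x₀ ∈ Ioo c d := hsub _ _ ht₀R
  obtain ⟨xt, hxt1, hxt2⟩ := exists_between hx₀I.1
  obtain ⟨t₁, ht₁⟩ := hcov xt ⟨hxt1, hxt2.trans hx₀I.2⟩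
  obtain ⟨m₁, hm₁⟩ := hlst t₁ xt ht₁
  have hm₁x₀ : m₁ < x₀ := lt_of_le_of_lt (hm₁.2 ht₁) hxt2
  obtain ⟨a₁, b₁, ha₁, hb₁, hclean⟩ :=
    not_acc_elim (noAcc hlo (def2_fiber_fst hR t₁) (hni t₁) x₀)
  have hgx₀ : max a₁ m₁ < x₀ := max_lt ha₁ hm₁x₀
  have hKgap : ∀ w ∈ K, ¬ (max a₁ m₁ < w ∧ w < x₀) := by
    rintro w ⟨t, htwR, htwlb⟩ ⟨hgw, hwx₀⟩
    by_cases hle : t ≤ t₁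
    · have hmem : (t, m₁) ∈ R := hmono t t₁ hle ⟨w, htwR⟩ m₁ hm₁.1
      have : w ≤ m₁ := htwlb m₁ hmem
      exact absurd (lt_of_le_of_lt this (lt_of_le_of_lt (le_max_right a₁ m₁) hgw)) (lt_irrefl w)
    · have hwt₁ : (t₁, w) ∈ R := hmono t₁ t (le_of_lt (not_le.1 hle)) ⟨xt, ht₁⟩ w htwR
      have := hclean w hwt₁ (lt_of_le_of_lt (le_max_left _ _) hgw) (hwx₀.trans hb₁)
      exact absurd this (ne_of_lt hwx₀)
  obtain ⟨w, hw1, hw2⟩ := exists_between (max_lt hgx₀ hx₀.1)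
  have hwK : w ∈ K := hPQ ⟨lt_of_le_of_lt (le_max_right _ _) hw1, hw2.trans hx₀.2⟩
  exact hKgap w hwK ⟨lt_of_le_of_lt (le_max_left _ _) hw1, hw2⟩

end KL


section CORE
variable {L : FirstOrder.Language} {M : Type*} [L.IsOrdered] [LinearOrder M] [L.Structure M]
    [L.OrderedStructure M] [DenselyOrdered M] [NoMaxOrder M] [NoMinOrder M]
    [TopologicalSpace M] [OrderTopology M]

/-- No definable map from a definable interval-free set bounded below can cover an interval. -/
lemma CORE (hlo : LocallyOMinimal L M) (hdc : DefinablyComplete L M)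
    {E : Set M} {Φ : Set (M × M)} (hΦ : Def2 L M Φ)
    (hEni : NoInt E) {lb : M} (hEbd : ∀ e ∈ E, lb ≤ e)
    (hΦE : ∀ {e x}, (e, x) ∈ Φ → e ∈ E)
    (hfun : ∀ {e x x'}, (e, x) ∈ Φ → (e, x') ∈ Φ → x = x')
    {a' b' : M} (hab : a' < b')
    (hsur : ∀ x ∈ Ioo a' b', ∃ e, (e, x) ∈ Φ) : False := by
  classical
  -- the set of minimal-index pairs with value in (a', b')
  set Φ₂ : Set (M × M) :=
    {p | p ∈ Φ ∧ (a' < p.2 ∧ p.2 < b') ∧ ∀ e', (e', p.2) ∈ Φ → p.1 ≤ e'} with hΦ₂def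
  have hΦ₂dfn : Def2 L M Φ₂ := by
    refine def2_of_fm (ρ1 := ![]) (ρ2 := ![Φ]) (fun b => b.elim0)
      (fun b => by fin_cases b <;> exact hΦ)
      ((Fm.bin 0 0 1).and (((Fm.gtC 1 a').and (Fm.ltC 1 b')).and
        (Fm.all ((Fm.bin 0 0 2).imp (Fm.le 1 0))))) (fun e x => ?_)
    simp only [hΦ₂def, Fm.realize_and, Fm.realize_bin, Fm.realize_gtC, Fm.realize_ltC,
      Fm.realize_all, Fm.realize_imp, Fm.realize_le, Fin.cons_zero, cons_eval_2_1, cons_eval_2_2,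
      vec1_eval0, vec2_eval0, vec2_eval1, mem_setOf_eq]
  have hΦ₂Φ : ∀ {e x}, (e, x) ∈ Φ₂ → (e, x) ∈ Φ := fun h => h.1
  have hΦ₂E : ∀ {e x}, (e, x) ∈ Φ₂ → e ∈ E := fun h => hΦE h.1
  have hΦ₂I : ∀ {e x}, (e, x) ∈ Φ₂ → a' < x ∧ x < b' := fun h => h.2.1
  have hΦ₂fun : ∀ {e x x'}, (e, x) ∈ Φ₂ → (e, x') ∈ Φ₂ → x = x' :=
    fun h h' => hfun h.1 h'.1
  have hΦ₂sur : ∀ x ∈ Ioo a' b', ∃ e, (e, x) ∈ Φ₂ := by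
    intro x hx
    obtain ⟨e₀, he₀⟩ := hsur x hx
    obtain ⟨m, hm⟩ := exists_least hlo hdc (def2_fiber_snd hΦ x)
      (noInt_subset (fun e he => hΦE he) hEni) ⟨e₀, he₀⟩
      ⟨lb, fun e he => hEbd e (hΦE he)⟩
    exact ⟨m, hm.1, ⟨hx.1, hx.2⟩, fun e' h => hm.2 h⟩
  -- the "enumeration by time e" relation
  set CR : Set (M × M) := {p | ∃ e', e' ≤ p.1 ∧ (e', p.2) ∈ Φ₂} with hCRdef
  have hCRdfn : Def2 L M CR := by
    refine def2_of_fm (ρ1 := ![]) (ρ2 := ![Φ₂]) (fun b => b.elim0)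
      (fun b => by fin_cases b <;> exact hΦ₂dfn)
      (Fm.ex ((Fm.le 0 1).and (Fm.bin 0 0 2))) (fun e x => ?_)
    simp only [hCRdef, Fm.realize_ex, Fm.realize_and, Fm.realize_le, Fm.realize_bin,
      Fin.cons_zero, cons_eval_2_1, cons_eval_2_2, vec1_eval0, vec2_eval0, vec2_eval1, mem_setOf_eq]
  have hCRI : ∀ {e x}, (e, x) ∈ CR → a' < x ∧ x < b' := by
    rintro e x ⟨e', _, h⟩; exact hΦ₂I h
  have hCRmono : ∀ {e e' x}, e ≤ e' → (e, x) ∈ CR → (e', x) ∈ CR := by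
    rintro e e' x hee ⟨e'', h1, h2⟩; exact ⟨e'', h1.trans hee, h2⟩
  -- (b1) : no value-side right-accumulation of C e at any point
  have hb1 : ∀ e a₁, (∀ b, a₁ < b → ∃ w, (e, w) ∈ CR ∧ a₁ < w ∧ w < b) → False := by
    intro e a₁ hR
    set DR : Set (M × M) := {p | ∃ x', (p.1, x') ∈ Φ₂ ∧ a₁ < x' ∧ x' < p.2} with hDRdef
    have hDRdfn : Def2 L M DR := by
      refine def2_of_fm (ρ1 := ![]) (ρ2 := ![Φ₂]) (fun b => b.elim0)
        (fun b => by fin_cases b <;> exact hΦ₂dfn)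
        (Fm.ex ((Fm.bin 0 1 0).and ((Fm.gtC 0 a₁).and (Fm.lt 0 2)))) (fun e' x => ?_)
      simp only [hDRdef, Fm.realize_ex, Fm.realize_and, Fm.realize_bin, Fm.realize_gtC,
        Fm.realize_lt, Fin.cons_zero, cons_eval_2_1, cons_eval_2_2, vec1_eval0, vec2_eval0, vec2_eval1,
        mem_setOf_eq]
    have hDRE : ∀ {e' x}, (e', x) ∈ DR → e' ∈ E := by
      rintro e' x ⟨x', h, _, _⟩; exact hΦ₂E h
    have hDmono : ∀ {e' x x''}, x ≤ x'' → (e', x) ∈ DR → (e', x'') ∈ DR := by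
      rintro e' x x'' hxx ⟨x', h1, h2, h3⟩; exact ⟨x', h1, h2, lt_of_lt_of_le h3 hxx⟩
    have hDne : ∀ x, a₁ < x → ∃ m, IsLeast {e' | (e', x) ∈ DR} m ∧ m ≤ e := by
      intro x hx
      obtain ⟨w, hwCR, hw1, hw2⟩ := hR x hx
      obtain ⟨e'', he''le, he''⟩ := hwCR
      have hne : e'' ∈ {e' | (e', x) ∈ DR} := ⟨w, he'', hw1, hw2⟩
      obtain ⟨m, hm⟩ := exists_least hlo hdc (def2_fiber_snd hDRdfn x)
        (noInt_subset (fun e' he' => hDRE he') hEni) ⟨e'', hne⟩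
        ⟨lb, fun e' he' => hEbd e' (hDRE he')⟩
      exact ⟨m, hm, le_trans (hm.2 hne) he''le⟩
    obtain ⟨X₀, hX₀⟩ := exists_gt a₁
    set V : Set M := {m | ∃ x, (a₁ < x ∧ x < X₀) ∧ (m, x) ∈ DR ∧
      ∀ e', (e', x) ∈ DR → m ≤ e'} with hVdef
    have hVdfn : Def1 L M V := by
      refine def1_of_fm (ρ1 := ![]) (ρ2 := ![DR]) (fun b => b.elim0)
        (fun b => by fin_cases b <;> exact hDRdfn)
        (Fm.ex (((Fm.gtC 0 a₁).and (Fm.ltC 0 X₀)).and ((Fm.bin 0 1 0).and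
          (Fm.all ((Fm.bin 0 0 1).imp (Fm.le 2 0)))))) (fun m => ?_)
      simp only [hVdef, Fm.realize_ex, Fm.realize_and, Fm.realize_gtC, Fm.realize_ltC,
        Fm.realize_bin, Fm.realize_all, Fm.realize_imp, Fm.realize_le, Fin.cons_zero,
        cons_eval_1_1, cons_eval_2_1, cons_eval_2_2, vec1_eval0, mem_setOf_eq]
    have hVE : V ⊆ E := by rintro m ⟨x, _, hm, _⟩; exact hDRE hm
    have hVne : V.Nonempty := by
      obtain ⟨x, hx1, hx2⟩ := exists_between hX₀
      obtain ⟨m, hm, _⟩ := hDne x hx1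
      exact ⟨m, x, ⟨hx1, hx2⟩, hm.1, fun e' h => hm.2 h⟩
    have hVbd : BddAbove V := by
      refine ⟨e, ?_⟩
      rintro m ⟨x, ⟨hx1, _⟩, hm1, hm2⟩
      obtain ⟨m', hm', hm'e⟩ := hDne x hx1
      exact le_trans (hm2 m' hm'.1) hm'e
    obtain ⟨em, hemV, hemub⟩ := exists_greatest hlo hdc hVdfn (noInt_subset hVE hEni) hVne hVbd
    obtain ⟨x₁, ⟨hx₁1, hx₁2⟩, hx₁mem, hx₁lb⟩ := hemV
    have hstab : ∀ x, a₁ < x → x ≤ x₁ → (em, x) ∈ DR := by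
      intro x hx hxx₁
      obtain ⟨m, hmle, _⟩ := hDne x hx
      have hmV : m ∈ V := ⟨x, ⟨hx, lt_of_le_of_lt hxx₁ hx₁2⟩, hmle.1, fun e' h => hmle.2 h⟩
      have h2 : em ≤ m := hx₁lb m (hDmono hxx₁ hmle.1)
      have : m = em := le_antisymm (hemub hmV) h2
      exact this ▸ hmle.1
    obtain ⟨xv, hxvΦ, hxv1, _⟩ := hstab x₁ hx₁1 le_rfl
    obtain ⟨xv', hxv'Φ, _, hxv'2⟩ := hstab (min xv x₁) (lt_min hxv1 hx₁1) (min_le_right _ _)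
    have heq : xv' = xv := hΦ₂fun hxv'Φ hxvΦ
    rw [heq] at hxv'2
    exact absurd hxv'2 (not_lt.2 (min_le_left _ _))
  -- (b2) : no value-side left-accumulation of C e at any point
  have hb2 : ∀ e b₁, (∀ a, a < b₁ → ∃ w, (e, w) ∈ CR ∧ a < w ∧ w < b₁) → False := by
    intro e b₁ hR
    set DR : Set (M × M) := {p | ∃ x', (p.1, x') ∈ Φ₂ ∧ p.2 < x' ∧ x' < b₁} with hDRdef
    have hDRdfn : Def2 L M DR := by
      refine def2_of_fm (ρ1 := ![]) (ρ2 := ![Φ₂]) (fun b => b.elim0)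
        (fun b => by fin_cases b <;> exact hΦ₂dfn)
        (Fm.ex ((Fm.bin 0 1 0).and ((Fm.lt 2 0).and (Fm.ltC 0 b₁)))) (fun e' x => ?_)
      simp only [hDRdef, Fm.realize_ex, Fm.realize_and, Fm.realize_bin, Fm.realize_ltC,
        Fm.realize_lt, Fin.cons_zero, cons_eval_2_1, cons_eval_2_2, vec1_eval0, vec2_eval0, vec2_eval1,
        mem_setOf_eq]
    have hDRE : ∀ {e' x}, (e', x) ∈ DR → e' ∈ E := by
      rintro e' x ⟨x', h, _, _⟩; exact hΦ₂E h
    have hDmono : ∀ {e' x x''}, x'' ≤ x → (e', x) ∈ DR → (e', x'') ∈ DR := by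
      rintro e' x x'' hxx ⟨x', h1, h2, h3⟩; exact ⟨x', h1, lt_of_le_of_lt hxx h2, h3⟩
    have hDne : ∀ x, x < b₁ → ∃ m, IsLeast {e' | (e', x) ∈ DR} m ∧ m ≤ e := by
      intro x hx
      obtain ⟨w, hwCR, hw1, hw2⟩ := hR x hx
      obtain ⟨e'', he''le, he''⟩ := hwCR
      have hne : e'' ∈ {e' | (e', x) ∈ DR} := ⟨w, he'', hw1, hw2⟩
      obtain ⟨m, hm⟩ := exists_least hlo hdc (def2_fiber_snd hDRdfn x)
        (noInt_subset (fun e' he' => hDRE he') hEni) ⟨e'', hne⟩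
        ⟨lb, fun e' he' => hEbd e' (hDRE he')⟩
      exact ⟨m, hm, le_trans (hm.2 hne) he''le⟩
    obtain ⟨X₀, hX₀⟩ := exists_lt b₁
    set V : Set M := {m | ∃ x, (X₀ < x ∧ x < b₁) ∧ (m, x) ∈ DR ∧
      ∀ e', (e', x) ∈ DR → m ≤ e'} with hVdef
    have hVdfn : Def1 L M V := by
      refine def1_of_fm (ρ1 := ![]) (ρ2 := ![DR]) (fun b => b.elim0)
        (fun b => by fin_cases b <;> exact hDRdfn)
        (Fm.ex (((Fm.gtC 0 X₀).and (Fm.ltC 0 b₁)).and ((Fm.bin 0 1 0).and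
          (Fm.all ((Fm.bin 0 0 1).imp (Fm.le 2 0)))))) (fun m => ?_)
      simp only [hVdef, Fm.realize_ex, Fm.realize_and, Fm.realize_gtC, Fm.realize_ltC,
        Fm.realize_bin, Fm.realize_all, Fm.realize_imp, Fm.realize_le, Fin.cons_zero,
        cons_eval_1_1, cons_eval_2_1, cons_eval_2_2, vec1_eval0, mem_setOf_eq]
    have hVE : V ⊆ E := by rintro m ⟨x, _, hm, _⟩; exact hDRE hm
    have hVne : V.Nonempty := by
      obtain ⟨x, hx1, hx2⟩ := exists_between hX₀
      obtain ⟨m, hm, _⟩ := hDne x hx2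
      exact ⟨m, x, ⟨hx1, hx2⟩, hm.1, fun e' h => hm.2 h⟩
    have hVbd : BddAbove V := by
      refine ⟨e, ?_⟩
      rintro m ⟨x, ⟨_, hx2⟩, hm1, hm2⟩
      obtain ⟨m', hm', hm'e⟩ := hDne x hx2
      exact le_trans (hm2 m' hm'.1) hm'e
    obtain ⟨em, hemV, hemub⟩ := exists_greatest hlo hdc hVdfn (noInt_subset hVE hEni) hVne hVbd
    obtain ⟨x₁, ⟨hx₁1, hx₁2⟩, hx₁mem, hx₁lb⟩ := hemV
    have hstab : ∀ x, x₁ ≤ x → x < b₁ → (em, x) ∈ DR := by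
      intro x hx₁x hx
      obtain ⟨m, hmle, _⟩ := hDne x hx
      have hmV : m ∈ V := ⟨x, ⟨lt_of_lt_of_le hx₁1 hx₁x, hx⟩, hmle.1, fun e' h => hmle.2 h⟩
      have h2 : em ≤ m := hx₁lb m (hDmono hx₁x hmle.1)
      have : m = em := le_antisymm (hemub hmV) h2
      exact this ▸ hmle.1
    obtain ⟨xv, hxvΦ, hxv1, hxv2⟩ := hstab x₁ le_rfl hx₁2
    obtain ⟨xv', hxv'Φ, hxv'1, _⟩ := hstab (max xv x₁) (le_max_right _ _)
      (max_lt hxv2 hx₁2)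
    have heq : xv' = xv := hΦ₂fun hxv'Φ hxvΦ
    rw [heq] at hxv'1
    exact absurd hxv'1 (not_lt.2 (le_max_left _ _))
  -- least element of each C e
  have hCleast : ∀ e x₀', (e, x₀') ∈ CR → ∃ κ, IsLeast {x | (e, x) ∈ CR} κ := by
    intro e x₀' h0
    obtain ⟨z, hz⟩ := (hdc _ (show Def1 L M {x | (e, x) ∈ CR} from def2_fiber_fst hCRdfn e)
      ⟨x₀', h0⟩).2 ⟨a', fun x hx => le_of_lt (hCRI hx).1⟩
    by_cases hzC : (e, z) ∈ CR
    · exact ⟨z, hzC, hz.1⟩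
    · exfalso
      apply hb1 e z
      intro b hb
      have hnb : b ∉ lowerBounds {x | (e, x) ∈ CR} := fun h => absurd (hz.2 h) (not_le.2 hb)
      obtain ⟨w, hwC, hwb⟩ : ∃ w ∈ {x | (e, x) ∈ CR}, w < b := by
        by_contra h; push_neg at h; exact hnb (fun w hw => (h w hw))
      have hzw : z < w := lt_of_le_of_ne (hz.1 hwC) (fun h => hzC (h ▸ hwC))
      exact ⟨w, hwC, hzw, hwb⟩
  -- the set of minima
  set K : Set M := {x | ∃ e, (e, x) ∈ CR ∧ ∀ x', (e, x') ∈ CR → x ≤ x'} with hKdef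
  have hKdfn : Def1 L M K := by
    refine def1_of_fm (ρ1 := ![]) (ρ2 := ![CR]) (fun b => b.elim0)
      (fun b => by fin_cases b <;> exact hCRdfn)
      (Fm.ex ((Fm.bin 0 0 1).and (Fm.all ((Fm.bin 0 1 0).imp (Fm.le 2 0))))) (fun x => ?_)
    simp only [hKdef, Fm.realize_ex, Fm.realize_and, Fm.realize_bin, Fm.realize_all,
      Fm.realize_imp, Fm.realize_le, Fin.cons_zero, cons_eval_1_1, cons_eval_2_1, cons_eval_2_2,
      vec1_eval0, mem_setOf_eq]
  have hKsub : ∀ x ∈ K, a' < x ∧ x < b' := by rintro x ⟨e, h1, _⟩; exact hCRI h1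
  have h4a : ∀ x ∈ Ioo a' b', ∃ w ∈ K, w ≤ x := by
    intro x hx
    obtain ⟨e, he⟩ := hΦ₂sur x hx
    have hxCR : (e, x) ∈ CR := ⟨e, le_rfl, he⟩
    obtain ⟨κ, hκ⟩ := hCleast e x hxCR
    exact ⟨κ, ⟨e, hκ.1, fun x' h => hκ.2 h⟩, hκ.2 hxCR⟩
  have hacc : IsAcc a' K := by
    intro a b haa hab'
    obtain ⟨x, hx1, hx2⟩ := exists_between (lt_min hab' hab)
    have hxI : x ∈ Ioo a' b' := ⟨hx1, lt_of_lt_of_le hx2 (min_le_right _ _)⟩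
    obtain ⟨w, hwK, hwx⟩ := h4a x hxI
    exact ⟨w, hwK, ne_of_gt (hKsub w hwK).1, haa.trans (hKsub w hwK).1,
      lt_of_le_of_lt hwx (lt_of_lt_of_le hx2 (min_le_left _ _))⟩
  obtain ⟨p, q, hpq, hPQ⟩ := t2 hlo hKdfn hacc
  obtain ⟨x₀, hx₀⟩ := nonempty_Ioo.2 hpq
  obtain ⟨e₀, hx₀CR, hx₀lb⟩ := hPQ hx₀
  have hx₀I : a' < x₀ ∧ x₀ < b' := hCRI hx₀CR
  obtain ⟨xt, hxt1, hxt2⟩ := exists_between hx₀I.1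
  obtain ⟨m₁, hm₁K, hm₁le⟩ := h4a xt ⟨hxt1, hxt2.trans hx₀I.2⟩
  obtain ⟨e₁, hm₁CR, hm₁lb⟩ := hm₁K
  have hm₁x₀ : m₁ < x₀ := lt_of_le_of_lt hm₁le hxt2
  -- left gap of C e₁ below x₀
  have hLgap : ∃ a₁, a₁ < x₀ ∧ ∀ w, (e₁, w) ∈ CR → a₁ < w → x₀ ≤ w := by
    have hneg : ¬ (∀ a, a < x₀ → ∃ w, (e₁, w) ∈ CR ∧ a < w ∧ w < x₀) := fun h => hb2 e₁ x₀ h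
    push_neg at hneg
    obtain ⟨a₁, ha₁, h⟩ := hneg
    refine ⟨a₁, ha₁, fun w hw h1 => ?_⟩
    by_contra h2
    exact absurd (h w hw h1) (by push_neg; exact lt_of_not_ge h2)
  obtain ⟨a₁, ha₁, hclean⟩ := hLgap
  have hgx₀ : max a₁ m₁ < x₀ := max_lt ha₁ hm₁x₀
  have hKgap : ∀ w ∈ K, ¬ (max a₁ m₁ < w ∧ w < x₀) := by
    rintro w ⟨e, hwCR, hwlb⟩ ⟨hgw, hwx₀⟩
    by_cases hle : e ≤ e₁
    · have hwCR1 : (e₁, w) ∈ CR := hCRmono hle hwCR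
      exact absurd (hclean w hwCR1 (lt_of_le_of_lt (le_max_left _ _) hgw)) (not_le.2 hwx₀)
    · have hm₁e : (e, m₁) ∈ CR := hCRmono (le_of_lt (not_le.1 hle)) hm₁CR
      have : w ≤ m₁ := hwlb m₁ hm₁e
      exact absurd (lt_of_le_of_lt this (lt_of_le_of_lt (le_max_right a₁ m₁) hgw)) (lt_irrefl w)
  obtain ⟨w, hw1, hw2⟩ := exists_between (max_lt hgx₀ hx₀.1)
  have hwK : w ∈ K := hPQ ⟨lt_of_le_of_lt (le_max_right _ _) hw1, hw2.trans hx₀.2⟩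
  exact hKgap w hwK ⟨lt_of_le_of_lt (le_max_left _ _) hw1, hw2⟩

end CORE


section COREM
variable {L : FirstOrder.Language} {M : Type*} [L.IsOrdered] [LinearOrder M] [L.Structure M]
    [L.OrderedStructure M] [DenselyOrdered M] [NoMaxOrder M] [NoMinOrder M]
    [TopologicalSpace M] [OrderTopology M]

/-- Mirror of `CORE` : the enumerating set is bounded above. -/
lemma COREm (hlo : LocallyOMinimal L M) (hdc : DefinablyComplete L M)
    {E : Set M} {Φ : Set (M × M)} (hΦ : Def2 L M Φ)
    (hEni : NoInt E) {ub : M} (hEbd : ∀ e ∈ E, e ≤ ub)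
    (hΦE : ∀ {e x}, (e, x) ∈ Φ → e ∈ E)
    (hfun : ∀ {e x x'}, (e, x) ∈ Φ → (e, x') ∈ Φ → x = x')
    {a' b' : M} (hab : a' < b')
    (hsur : ∀ x ∈ Ioo a' b', ∃ e, (e, x) ∈ Φ) : False := by
  classical
  set Φ₂ : Set (M × M) :=
    {p | p ∈ Φ ∧ (a' < p.2 ∧ p.2 < b') ∧ ∀ e', (e', p.2) ∈ Φ → e' ≤ p.1} with hΦ₂def
  have hΦ₂dfn : Def2 L M Φ₂ := by
    refine def2_of_fm (ρ1 := ![]) (ρ2 := ![Φ]) (fun b => b.elim0)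
      (fun b => by fin_cases b <;> exact hΦ)
      ((Fm.bin 0 0 1).and (((Fm.gtC 1 a').and (Fm.ltC 1 b')).and
        (Fm.all ((Fm.bin 0 0 2).imp (Fm.le 0 1))))) (fun e x => ?_)
    simp only [hΦ₂def, Fm.realize_and, Fm.realize_bin, Fm.realize_gtC, Fm.realize_ltC,
      Fm.realize_all, Fm.realize_imp, Fm.realize_le, Fin.cons_zero, cons_eval_2_1, cons_eval_2_2,
      vec1_eval0, vec2_eval0, vec2_eval1, mem_setOf_eq]
  have hΦ₂E : ∀ {e x}, (e, x) ∈ Φ₂ → e ∈ E := fun h => hΦE h.1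
  have hΦ₂I : ∀ {e x}, (e, x) ∈ Φ₂ → a' < x ∧ x < b' := fun h => h.2.1
  have hΦ₂fun : ∀ {e x x'}, (e, x) ∈ Φ₂ → (e, x') ∈ Φ₂ → x = x' :=
    fun h h' => hfun h.1 h'.1
  have hΦ₂sur : ∀ x ∈ Ioo a' b', ∃ e, (e, x) ∈ Φ₂ := by
    intro x hx
    obtain ⟨e₀, he₀⟩ := hsur x hx
    obtain ⟨m, hm⟩ := exists_greatest hlo hdc (def2_fiber_snd hΦ x)
      (noInt_subset (fun e he => hΦE he) hEni) ⟨e₀, he₀⟩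
      ⟨ub, fun e he => hEbd e (hΦE he)⟩
    exact ⟨m, hm.1, ⟨hx.1, hx.2⟩, fun e' h => hm.2 h⟩
  set CR : Set (M × M) := {p | ∃ e', p.1 ≤ e' ∧ (e', p.2) ∈ Φ₂} with hCRdef
  have hCRdfn : Def2 L M CR := by
    refine def2_of_fm (ρ1 := ![]) (ρ2 := ![Φ₂]) (fun b => b.elim0)
      (fun b => by fin_cases b <;> exact hΦ₂dfn)
      (Fm.ex ((Fm.le 1 0).and (Fm.bin 0 0 2))) (fun e x => ?_)
    simp only [hCRdef, Fm.realize_ex, Fm.realize_and, Fm.realize_le, Fm.realize_bin,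
      Fin.cons_zero, cons_eval_2_1, cons_eval_2_2, vec1_eval0, vec2_eval0, vec2_eval1,
      mem_setOf_eq]
  have hCRI : ∀ {e x}, (e, x) ∈ CR → a' < x ∧ x < b' := by
    rintro e x ⟨e', _, h⟩; exact hΦ₂I h
  have hCRmono : ∀ {e e' x}, e ≤ e' → (e', x) ∈ CR → (e, x) ∈ CR := by
    rintro e e' x hee ⟨e'', h1, h2⟩; exact ⟨e'', hee.trans h1, h2⟩
  have hb1 : ∀ e a₁, (∀ b, a₁ < b → ∃ w, (e, w) ∈ CR ∧ a₁ < w ∧ w < b) → False := by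
    intro e a₁ hR
    set DR : Set (M × M) := {p | ∃ x', (p.1, x') ∈ Φ₂ ∧ a₁ < x' ∧ x' < p.2} with hDRdef
    have hDRdfn : Def2 L M DR := by
      refine def2_of_fm (ρ1 := ![]) (ρ2 := ![Φ₂]) (fun b => b.elim0)
        (fun b => by fin_cases b <;> exact hΦ₂dfn)
        (Fm.ex ((Fm.bin 0 1 0).and ((Fm.gtC 0 a₁).and (Fm.lt 0 2)))) (fun e' x => ?_)
      simp only [hDRdef, Fm.realize_ex, Fm.realize_and, Fm.realize_bin, Fm.realize_gtC,
        Fm.realize_lt, Fin.cons_zero, cons_eval_2_1, cons_eval_2_2, vec1_eval0, vec2_eval0,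
        vec2_eval1, mem_setOf_eq]
    have hDRE : ∀ {e' x}, (e', x) ∈ DR → e' ∈ E := by
      rintro e' x ⟨x', h, _, _⟩; exact hΦ₂E h
    have hDmono : ∀ {e' x x''}, x ≤ x'' → (e', x) ∈ DR → (e', x'') ∈ DR := by
      rintro e' x x'' hxx ⟨x', h1, h2, h3⟩; exact ⟨x', h1, h2, lt_of_lt_of_le h3 hxx⟩
    have hDne : ∀ x, a₁ < x → ∃ m, IsGreatest {e' | (e', x) ∈ DR} m ∧ e ≤ m := by
      intro x hx
      obtain ⟨w, hwCR, hw1, hw2⟩ := hR x hx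
      obtain ⟨e'', he''le, he''⟩ := hwCR
      have hne : e'' ∈ {e' | (e', x) ∈ DR} := ⟨w, he'', hw1, hw2⟩
      obtain ⟨m, hm⟩ := exists_greatest hlo hdc (def2_fiber_snd hDRdfn x)
        (noInt_subset (fun e' he' => hDRE he') hEni) ⟨e'', hne⟩
        ⟨ub, fun e' he' => hEbd e' (hDRE he')⟩
      exact ⟨m, hm, le_trans he''le (hm.2 hne)⟩
    obtain ⟨X₀, hX₀⟩ := exists_gt a₁
    set V : Set M := {m | ∃ x, (a₁ < x ∧ x < X₀) ∧ (m, x) ∈ DR ∧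
      ∀ e', (e', x) ∈ DR → e' ≤ m} with hVdef
    have hVdfn : Def1 L M V := by
      refine def1_of_fm (ρ1 := ![]) (ρ2 := ![DR]) (fun b => b.elim0)
        (fun b => by fin_cases b <;> exact hDRdfn)
        (Fm.ex (((Fm.gtC 0 a₁).and (Fm.ltC 0 X₀)).and ((Fm.bin 0 1 0).and
          (Fm.all ((Fm.bin 0 0 1).imp (Fm.le 0 2)))))) (fun m => ?_)
      simp only [hVdef, Fm.realize_ex, Fm.realize_and, Fm.realize_gtC, Fm.realize_ltC,
        Fm.realize_bin, Fm.realize_all, Fm.realize_imp, Fm.realize_le, Fin.cons_zero,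
        cons_eval_1_1, cons_eval_2_1, cons_eval_2_2, vec1_eval0, mem_setOf_eq]
    have hVE : V ⊆ E := by rintro m ⟨x, _, hm, _⟩; exact hDRE hm
    have hVne : V.Nonempty := by
      obtain ⟨x, hx1, hx2⟩ := exists_between hX₀
      obtain ⟨m, hm, _⟩ := hDne x hx1
      exact ⟨m, x, ⟨hx1, hx2⟩, hm.1, fun e' h => hm.2 h⟩
    have hVbd : BddBelow V := by
      refine ⟨e, ?_⟩
      rintro m ⟨x, ⟨hx1, _⟩, hm1, hm2⟩
      obtain ⟨m', hm', hm'e⟩ := hDne x hx1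
      exact le_trans hm'e (hm2 m' hm'.1)
    obtain ⟨em, hemV, hemlb⟩ := exists_least hlo hdc hVdfn (noInt_subset hVE hEni) hVne hVbd
    obtain ⟨x₁, ⟨hx₁1, hx₁2⟩, hx₁mem, hx₁ub⟩ := hemV
    have hstab : ∀ x, a₁ < x → x ≤ x₁ → (em, x) ∈ DR := by
      intro x hx hxx₁
      obtain ⟨m, hmle, _⟩ := hDne x hx
      have hmV : m ∈ V := ⟨x, ⟨hx, lt_of_le_of_lt hxx₁ hx₁2⟩, hmle.1, fun e' h => hmle.2 h⟩
      have h2 : m ≤ em := hx₁ub m (hDmono hxx₁ hmle.1)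
      have : m = em := le_antisymm h2 (hemlb hmV)
      exact this ▸ hmle.1
    obtain ⟨xv, hxvΦ, hxv1, _⟩ := hstab x₁ hx₁1 le_rfl
    obtain ⟨xv', hxv'Φ, _, hxv'2⟩ := hstab (min xv x₁) (lt_min hxv1 hx₁1) (min_le_right _ _)
    have heq : xv' = xv := hΦ₂fun hxv'Φ hxvΦ
    rw [heq] at hxv'2
    exact absurd hxv'2 (not_lt.2 (min_le_left _ _))
  have hb2 : ∀ e b₁, (∀ a, a < b₁ → ∃ w, (e, w) ∈ CR ∧ a < w ∧ w < b₁) → False := by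
    intro e b₁ hR
    set DR : Set (M × M) := {p | ∃ x', (p.1, x') ∈ Φ₂ ∧ p.2 < x' ∧ x' < b₁} with hDRdef
    have hDRdfn : Def2 L M DR := by
      refine def2_of_fm (ρ1 := ![]) (ρ2 := ![Φ₂]) (fun b => b.elim0)
        (fun b => by fin_cases b <;> exact hΦ₂dfn)
        (Fm.ex ((Fm.bin 0 1 0).and ((Fm.lt 2 0).and (Fm.ltC 0 b₁)))) (fun e' x => ?_)
      simp only [hDRdef, Fm.realize_ex, Fm.realize_and, Fm.realize_bin, Fm.realize_ltC,
        Fm.realize_lt, Fin.cons_zero, cons_eval_2_1, cons_eval_2_2, vec1_eval0, vec2_eval0,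
        vec2_eval1, mem_setOf_eq]
    have hDRE : ∀ {e' x}, (e', x) ∈ DR → e' ∈ E := by
      rintro e' x ⟨x', h, _, _⟩; exact hΦ₂E h
    have hDmono : ∀ {e' x x''}, x'' ≤ x → (e', x) ∈ DR → (e', x'') ∈ DR := by
      rintro e' x x'' hxx ⟨x', h1, h2, h3⟩; exact ⟨x', h1, lt_of_le_of_lt hxx h2, h3⟩
    have hDne : ∀ x, x < b₁ → ∃ m, IsGreatest {e' | (e', x) ∈ DR} m ∧ e ≤ m := by
      intro x hx
      obtain ⟨w, hwCR, hw1, hw2⟩ := hR x hx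
      obtain ⟨e'', he''le, he''⟩ := hwCR
      have hne : e'' ∈ {e' | (e', x) ∈ DR} := ⟨w, he'', hw1, hw2⟩
      obtain ⟨m, hm⟩ := exists_greatest hlo hdc (def2_fiber_snd hDRdfn x)
        (noInt_subset (fun e' he' => hDRE he') hEni) ⟨e'', hne⟩
        ⟨ub, fun e' he' => hEbd e' (hDRE he')⟩
      exact ⟨m, hm, le_trans he''le (hm.2 hne)⟩
    obtain ⟨X₀, hX₀⟩ := exists_lt b₁
    set V : Set M := {m | ∃ x, (X₀ < x ∧ x < b₁) ∧ (m, x) ∈ DR ∧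
      ∀ e', (e', x) ∈ DR → e' ≤ m} with hVdef
    have hVdfn : Def1 L M V := by
      refine def1_of_fm (ρ1 := ![]) (ρ2 := ![DR]) (fun b => b.elim0)
        (fun b => by fin_cases b <;> exact hDRdfn)
        (Fm.ex (((Fm.gtC 0 X₀).and (Fm.ltC 0 b₁)).and ((Fm.bin 0 1 0).and
          (Fm.all ((Fm.bin 0 0 1).imp (Fm.le 0 2)))))) (fun m => ?_)
      simp only [hVdef, Fm.realize_ex, Fm.realize_and, Fm.realize_gtC, Fm.realize_ltC,
        Fm.realize_bin, Fm.realize_all, Fm.realize_imp, Fm.realize_le, Fin.cons_zero,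
        cons_eval_1_1, cons_eval_2_1, cons_eval_2_2, vec1_eval0, mem_setOf_eq]
    have hVE : V ⊆ E := by rintro m ⟨x, _, hm, _⟩; exact hDRE hm
    have hVne : V.Nonempty := by
      obtain ⟨x, hx1, hx2⟩ := exists_between hX₀
      obtain ⟨m, hm, _⟩ := hDne x hx2
      exact ⟨m, x, ⟨hx1, hx2⟩, hm.1, fun e' h => hm.2 h⟩
    have hVbd : BddBelow V := by
      refine ⟨e, ?_⟩
      rintro m ⟨x, ⟨_, hx2⟩, hm1, hm2⟩
      obtain ⟨m', hm', hm'e⟩ := hDne x hx2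
      exact le_trans hm'e (hm2 m' hm'.1)
    obtain ⟨em, hemV, hemlb⟩ := exists_least hlo hdc hVdfn (noInt_subset hVE hEni) hVne hVbd
    obtain ⟨x₁, ⟨hx₁1, hx₁2⟩, hx₁mem, hx₁ub⟩ := hemV
    have hstab : ∀ x, x₁ ≤ x → x < b₁ → (em, x) ∈ DR := by
      intro x hx₁x hx
      obtain ⟨m, hmle, _⟩ := hDne x hx
      have hmV : m ∈ V := ⟨x, ⟨lt_of_lt_of_le hx₁1 hx₁x, hx⟩, hmle.1, fun e' h => hmle.2 h⟩
      have h2 : m ≤ em := hx₁ub m (hDmono hx₁x hmle.1)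
      have : m = em := le_antisymm h2 (hemlb hmV)
      exact this ▸ hmle.1
    obtain ⟨xv, hxvΦ, hxv1, hxv2⟩ := hstab x₁ le_rfl hx₁2
    obtain ⟨xv', hxv'Φ, hxv'1, _⟩ := hstab (max xv x₁) (le_max_right _ _)
      (max_lt hxv2 hx₁2)
    have heq : xv' = xv := hΦ₂fun hxv'Φ hxvΦ
    rw [heq] at hxv'1
    exact absurd hxv'1 (not_lt.2 (le_max_left _ _))
  have hCleast : ∀ e x₀', (e, x₀') ∈ CR → ∃ κ, IsLeast {x | (e, x) ∈ CR} κ := by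
    intro e x₀' h0
    obtain ⟨z, hz⟩ := (hdc _ (show Def1 L M {x | (e, x) ∈ CR} from def2_fiber_fst hCRdfn e)
      ⟨x₀', h0⟩).2 ⟨a', fun x hx => le_of_lt (hCRI hx).1⟩
    by_cases hzC : (e, z) ∈ CR
    · exact ⟨z, hzC, hz.1⟩
    · exfalso
      apply hb1 e z
      intro b hb
      have hnb : b ∉ lowerBounds {x | (e, x) ∈ CR} := fun h => absurd (hz.2 h) (not_le.2 hb)
      obtain ⟨w, hwC, hwb⟩ : ∃ w ∈ {x | (e, x) ∈ CR}, w < b := by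
        by_contra h; push_neg at h; exact hnb (fun w hw => (h w hw))
      have hzw : z < w := lt_of_le_of_ne (hz.1 hwC) (fun h => hzC (h ▸ hwC))
      exact ⟨w, hwC, hzw, hwb⟩
  set K : Set M := {x | ∃ e, (e, x) ∈ CR ∧ ∀ x', (e, x') ∈ CR → x ≤ x'} with hKdef
  have hKdfn : Def1 L M K := by
    refine def1_of_fm (ρ1 := ![]) (ρ2 := ![CR]) (fun b => b.elim0)
      (fun b => by fin_cases b <;> exact hCRdfn)
      (Fm.ex ((Fm.bin 0 0 1).and (Fm.all ((Fm.bin 0 1 0).imp (Fm.le 2 0))))) (fun x => ?_)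
    simp only [hKdef, Fm.realize_ex, Fm.realize_and, Fm.realize_bin, Fm.realize_all,
      Fm.realize_imp, Fm.realize_le, Fin.cons_zero, cons_eval_1_1, cons_eval_2_1, cons_eval_2_2,
      vec1_eval0, mem_setOf_eq]
  have hKsub : ∀ x ∈ K, a' < x ∧ x < b' := by rintro x ⟨e, h1, _⟩; exact hCRI h1
  have h4a : ∀ x ∈ Ioo a' b', ∃ w ∈ K, w ≤ x := by
    intro x hx
    obtain ⟨e, he⟩ := hΦ₂sur x hx
    have hxCR : (e, x) ∈ CR := ⟨e, le_rfl, he⟩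
    obtain ⟨κ, hκ⟩ := hCleast e x hxCR
    exact ⟨κ, ⟨e, hκ.1, fun x' h => hκ.2 h⟩, hκ.2 hxCR⟩
  have hacc : IsAcc a' K := by
    intro a b haa hab'
    obtain ⟨x, hx1, hx2⟩ := exists_between (lt_min hab' hab)
    have hxI : x ∈ Ioo a' b' := ⟨hx1, lt_of_lt_of_le hx2 (min_le_right _ _)⟩
    obtain ⟨w, hwK, hwx⟩ := h4a x hxI
    exact ⟨w, hwK, ne_of_gt (hKsub w hwK).1, haa.trans (hKsub w hwK).1,
      lt_of_le_of_lt hwx (lt_of_lt_of_le hx2 (min_le_left _ _))⟩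
  obtain ⟨p, q, hpq, hPQ⟩ := t2 hlo hKdfn hacc
  obtain ⟨x₀, hx₀⟩ := nonempty_Ioo.2 hpq
  obtain ⟨e₀, hx₀CR, hx₀lb⟩ := hPQ hx₀
  have hx₀I : a' < x₀ ∧ x₀ < b' := hCRI hx₀CR
  obtain ⟨xt, hxt1, hxt2⟩ := exists_between hx₀I.1
  obtain ⟨m₁, hm₁K, hm₁le⟩ := h4a xt ⟨hxt1, hxt2.trans hx₀I.2⟩
  obtain ⟨e₁, hm₁CR, hm₁lb⟩ := hm₁K
  have hm₁x₀ : m₁ < x₀ := lt_of_le_of_lt hm₁le hxt2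
  have hLgap : ∃ a₁, a₁ < x₀ ∧ ∀ w, (e₁, w) ∈ CR → a₁ < w → x₀ ≤ w := by
    have hneg : ¬ (∀ a, a < x₀ → ∃ w, (e₁, w) ∈ CR ∧ a < w ∧ w < x₀) := fun h => hb2 e₁ x₀ h
    push_neg at hneg
    obtain ⟨a₁, ha₁, h⟩ := hneg
    refine ⟨a₁, ha₁, fun w hw h1 => ?_⟩
    by_contra h2
    exact absurd (h w hw h1) (by push_neg; exact lt_of_not_ge h2)
  obtain ⟨a₁, ha₁, hclean⟩ := hLgap
  have hgx₀ : max a₁ m₁ < x₀ := max_lt ha₁ hm₁x₀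
  have hKgap : ∀ w ∈ K, ¬ (max a₁ m₁ < w ∧ w < x₀) := by
    rintro w ⟨e, hwCR, hwlb⟩ ⟨hgw, hwx₀⟩
    by_cases hle : e₁ ≤ e
    · have hwCR1 : (e₁, w) ∈ CR := hCRmono hle hwCR
      exact absurd (hclean w hwCR1 (lt_of_le_of_lt (le_max_left _ _) hgw)) (not_le.2 hwx₀)
    · have hm₁e : (e, m₁) ∈ CR := hCRmono (le_of_lt (not_le.1 hle)) hm₁CR
      have : w ≤ m₁ := hwlb m₁ hm₁e
      exact absurd (lt_of_le_of_lt this (lt_of_le_of_lt (le_max_right a₁ m₁) hgw)) (lt_irrefl w)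
  obtain ⟨w, hw1, hw2⟩ := exists_between (max_lt hgx₀ hx₀.1)
  have hwK : w ∈ K := hPQ ⟨lt_of_le_of_lt (le_max_right _ _) hw1, hw2.trans hx₀.2⟩
  exact hKgap w hwK ⟨lt_of_le_of_lt (le_max_left _ _) hw1, hw2⟩

end COREM


section BOSS
variable {L : FirstOrder.Language} {M : Type*} [L.IsOrdered] [LinearOrder M] [L.Structure M]
    [L.OrderedStructure M] [DenselyOrdered M] [NoMaxOrder M] [NoMinOrder M]
    [TopologicalSpace M] [OrderTopology M]

/-- No definable family of right-extending intervals over a whole interval can have all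
its "covering" sets interval-free. -/
lemma BOSS (hlo : LocallyOMinimal L M) (hdc : DefinablyComplete L M)
    {q₁ q₂ : M} (h12 : q₁ < q₂) {W : Set (M × M)} (hW : Def2 L M W)
    (hWdom : ∀ z, q₁ < z → z < q₂ → ∃ u, (z, u) ∈ W)
    (hWfun : ∀ {z u u'}, (z, u) ∈ W → (z, u') ∈ W → u = u')
    (hWsub : ∀ {z u}, (z, u) ∈ W → (q₁ < z ∧ z < q₂) ∧ z < u ∧ u ≤ q₂)
    (hH : ∀ y, q₁ < y → y < q₂ →
      NoInt {z | (q₁ < z ∧ z < y) ∧ ∃ u, (z, u) ∈ W ∧ y < u}) : False := by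
  classical
  set Hrel : Set (M × M) := {p | (q₁ < p.1 ∧ p.1 < p.2) ∧ ∃ u, (p.1, u) ∈ W ∧ p.2 < u}
    with hHreldef
  have hHreldfn : Def2 L M Hrel := by
    refine def2_of_fm (ρ1 := ![]) (ρ2 := ![W]) (fun b => b.elim0)
      (fun b => by fin_cases b <;> exact hW)
      (((Fm.gtC 0 q₁).and (Fm.lt 0 1)).and (Fm.ex ((Fm.bin 0 1 0).and (Fm.lt 2 0))))
      (fun z y => ?_)
    simp only [hHreldef, Fm.realize_and, Fm.realize_gtC, Fm.realize_lt, Fm.realize_ex,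
      Fm.realize_bin, Fin.cons_zero, cons_eval_2_1, cons_eval_2_2, vec1_eval0, vec2_eval0,
      vec2_eval1, mem_setOf_eq]
  have hHset : ∀ y, q₁ < y → y < q₂ → NoInt {z | (z, y) ∈ Hrel} := fun y h1 h2 => hH y h1 h2
  -- the record set
  set Rh : Set M := {r | (q₁ < r ∧ r < q₂) ∧
    ∀ z, ∀ u, ∀ u', (q₁ < z ∧ z < r) → (z, u) ∈ W → (r, u') ∈ W → u ≤ u'} with hRhdef
  have hRhdfn : Def1 L M Rh := by
    refine def1_of_fm (ρ1 := ![]) (ρ2 := ![W]) (fun b => b.elim0)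
      (fun b => by fin_cases b <;> exact hW)
      (((Fm.gtC 0 q₁).and (Fm.ltC 0 q₂)).and (Fm.all (Fm.all (Fm.all
        (((Fm.gtC 2 q₁).and (Fm.lt 2 3)).imp ((Fm.bin 0 2 1).imp
          ((Fm.bin 0 3 0).imp (Fm.le 1 0)))))))) (fun r => ?_)
    simp only [hRhdef, Fm.realize_and, Fm.realize_gtC, Fm.realize_ltC, Fm.realize_all,
      Fm.realize_imp, Fm.realize_bin, Fm.realize_le, Fm.realize_lt, Fin.cons_zero,
      cons_eval_1_1, cons_eval_2_1, cons_eval_2_2, cons_eval_3_1, cons_eval_3_2, cons_eval_3_3,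
      vec1_eval0, mem_setOf_eq]
  -- records contain no interval
  have hRhni : NoInt Rh := by
    intro ρ₁ ρ₂ hρ hsub
    obtain ⟨z₁, hz₁⟩ := nonempty_Ioo.2 hρ
    have hz₁R : z₁ ∈ Rh := hsub hz₁
    obtain ⟨u₁, hu₁⟩ := hWdom z₁ hz₁R.1.1 hz₁R.1.2
    obtain ⟨ys, hy1, hy2⟩ := exists_between (lt_min (hWsub hu₁).2.1 hz₁.2)
    have hysu₁ : ys < u₁ := lt_of_lt_of_le hy2 (min_le_left _ _)
    have hysq2 : ys < q₂ := lt_of_lt_of_le hysu₁ (hWsub hu₁).2.2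
    have hysq1 : q₁ < ys := hz₁R.1.1.trans hy1
    refine hHset ys hysq1 hysq2 z₁ ys hy1 (fun z hz => ?_)
    have hzρ : z ∈ Ioo ρ₁ ρ₂ :=
      ⟨hz₁.1.trans hz.1, hz.2.trans (lt_of_lt_of_le hy2 (min_le_right _ _))⟩
    have hzR : z ∈ Rh := hsub hzρ
    obtain ⟨u, hu⟩ := hWdom z hzR.1.1 hzR.1.2
    have hu₁u : u₁ ≤ u := hzR.2 z₁ u₁ u ⟨hz₁R.1.1, hz.1⟩ hu₁ hu
    exact ⟨⟨hzR.1.1, hz.2⟩, u, hu, lt_of_lt_of_le hysu₁ hu₁u⟩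
  -- every comp is dominated by a record comp
  have hdomrec : ∀ z u, (z, u) ∈ W → ∃ r u', r ≤ z ∧ r ∈ Rh ∧ (r, u') ∈ W ∧ u ≤ u' := by
    intro z u hu
    set S : Set M := {z' | (q₁ < z' ∧ z' < z) ∧ ∃ u'', (z', u'') ∈ W ∧ u < u''} with hSdef
    by_cases hS : S.Nonempty
    · have hSdfn : Def1 L M S := by
        refine def1_of_fm (ρ1 := ![]) (ρ2 := ![W]) (fun b => b.elim0)
          (fun b => by fin_cases b <;> exact hW)
          (((Fm.gtC 0 q₁).and (Fm.ltC 0 z)).and (Fm.ex ((Fm.bin 0 1 0).and (Fm.gtC 0 u))))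
          (fun z' => ?_)
        simp only [hSdef, Fm.realize_and, Fm.realize_gtC, Fm.realize_ltC, Fm.realize_ex,
          Fm.realize_bin, Fin.cons_zero, cons_eval_1_1, vec1_eval0, mem_setOf_eq]
      obtain ⟨y₀, hy₀1, hy₀2⟩ := exists_between (hWsub hu).2.1
      have hy₀q2 : y₀ < q₂ := lt_of_lt_of_le hy₀2 (hWsub hu).2.2
      have hy₀q1 : q₁ < y₀ := (hWsub hu).1.1.trans hy₀1
      have hSsub : S ⊆ {z' | (z', y₀) ∈ Hrel} := by
        rintro z' ⟨⟨h1, h2⟩, u'', h3, h4⟩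
        exact ⟨⟨h1, h2.trans hy₀1⟩, u'', h3, lt_trans hy₀2 h4⟩
      obtain ⟨r, hr⟩ := exists_least hlo hdc hSdfn
        (noInt_subset hSsub (hHset y₀ hy₀q1 hy₀q2)) hS ⟨q₁, fun z' hz' => le_of_lt hz'.1.1⟩
      obtain ⟨⟨hrq₁, hrz⟩, ur, hur, huur⟩ := hr.1
      refine ⟨r, ur, le_of_lt hrz, ⟨⟨hrq₁, hrz.trans (hWsub hu).1.2⟩, ?_⟩, hur, le_of_lt huur⟩
      intro z'' v v' ⟨h1, h2⟩ hv hv'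
      have hz''S : z'' ∉ S := fun hmem => absurd (hr.2 hmem) (not_le.2 h2)
      have : ¬ (u < v) := fun hlt => hz''S ⟨⟨h1, h2.trans hrz⟩, v, hv, hlt⟩
      have hv'ur : v' = ur := hWfun hv' hur
      rw [hv'ur]
      exact le_of_lt (lt_of_le_of_lt (not_lt.1 this) huur)
    · refine ⟨z, u, le_rfl, ⟨(hWsub hu).1, ?_⟩, hu, le_rfl⟩
      intro z'' v v' ⟨h1, h2⟩ hv hv'
      have : ¬ (u < v) := fun hlt => hS ⟨z'', ⟨h1, h2⟩, v, hv, hlt⟩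
      calc v ≤ u := not_lt.1 this
        _ = v' := hWfun hu hv'
  -- δ : least record covering y
  set Dg : Set (M × M) := {p | (p.2, p.1) ∈ Hrel ∧ p.2 ∈ Rh ∧
    ∀ r', (r', p.1) ∈ Hrel → r' ∈ Rh → p.2 ≤ r'} with hDgdef
  have hDgdfn : Def2 L M Dg := by
    refine def2_of_fm (ρ1 := ![Rh]) (ρ2 := ![Hrel]) (fun b => by fin_cases b <;> exact hRhdfn)
      (fun b => by fin_cases b <;> exact hHreldfn)
      ((Fm.bin 0 1 0).and ((Fm.un 0 1).and (Fm.all ((Fm.bin 0 0 1).imp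
        ((Fm.un 0 0).imp (Fm.le 2 0)))))) (fun y r => ?_)
    simp only [hDgdef, Fm.realize_and, Fm.realize_bin, Fm.realize_un, Fm.realize_all,
      Fm.realize_imp, Fm.realize_le, Fin.cons_zero, cons_eval_2_1, cons_eval_2_2,
      vec1_eval0, vec2_eval0, vec2_eval1, mem_setOf_eq]
  have hδ : ∀ y z, (z, y) ∈ Hrel → ∃ r, (y, r) ∈ Dg := by
    intro y z hz
    have hyq1 : q₁ < y := hz.1.1.trans hz.1.2
    have hyq2 : y < q₂ := by
      obtain ⟨u, hu, hyu⟩ := hz.2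
      exact lt_of_lt_of_le hyu (hWsub hu).2.2
    set HR : Set M := {r | (r, y) ∈ Hrel ∧ r ∈ Rh} with hHRdef
    have hHRdfn : Def1 L M HR := by
      refine def1_of_fm (ρ1 := ![Rh]) (ρ2 := ![Hrel]) (fun b => by fin_cases b <;> exact hRhdfn)
        (fun b => by fin_cases b <;> exact hHreldfn)
        ((Fm.ex ((Fm.eqC 0 y).and (Fm.bin 0 1 0))).and (Fm.un 0 0)) (fun r => ?_)
      simp only [hHRdef, Fm.realize_and, Fm.realize_ex, Fm.realize_eqC, Fm.realize_bin,
        Fm.realize_un, Fin.cons_zero, cons_eval_1_1, vec1_eval0, mem_setOf_eq]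
      constructor
      · rintro ⟨h1, h2⟩; exact ⟨⟨y, rfl, h1⟩, h2⟩
      · rintro ⟨⟨a, ha, h1⟩, h2⟩; exact ⟨ha ▸ h1, h2⟩
    have hHRne : HR.Nonempty := by
      obtain ⟨u, hu, hyu⟩ := hz.2
      obtain ⟨r, u', hrz, hrR, hru', huu'⟩ := hdomrec z u hu
      exact ⟨r, ⟨⟨hrR.1.1, lt_of_le_of_lt hrz hz.1.2⟩, u', hru', lt_of_lt_of_le hyu huu'⟩, hrR⟩
    obtain ⟨r, hr⟩ := exists_least hlo hdc hHRdfn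
      (noInt_subset (fun r hr => hr.1) (hHset y hyq1 hyq2)) hHRne
      ⟨q₁, fun r hr => le_of_lt hr.1.1.1⟩
    exact ⟨r, hr.1.1, hr.1.2, fun r' h1 h2 => hr.2 ⟨h1, h2⟩⟩
  -- ι : infimum of the δ-fiber of a record
  set Ig : Set (M × M) := {p | (∃ y, (y, p.1) ∈ Dg) ∧ (∀ y, (y, p.1) ∈ Dg → p.2 ≤ y) ∧
    ∀ x', (∀ y, (y, p.1) ∈ Dg → x' ≤ y) → x' ≤ p.2} with hIgdef
  have hIgdfn : Def2 L M Ig := by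
    refine def2_of_fm (ρ1 := ![]) (ρ2 := ![Dg]) (fun b => b.elim0)
      (fun b => by fin_cases b <;> exact hDgdfn)
      ((Fm.ex (Fm.bin 0 0 1)).and ((Fm.all ((Fm.bin 0 0 1).imp (Fm.le 2 0))).and
        (Fm.all ((Fm.all ((Fm.bin 0 0 2).imp (Fm.le 1 0))).imp (Fm.le 0 2)))))
      (fun r x => ?_)
    simp only [hIgdef, Fm.realize_and, Fm.realize_ex, Fm.realize_bin, Fm.realize_all,
      Fm.realize_imp, Fm.realize_le, Fin.cons_zero, cons_eval_1_1, cons_eval_2_1, cons_eval_2_2,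
      cons_eval_3_1, cons_eval_3_2, cons_eval_3_3, vec1_eval0, vec2_eval0, vec2_eval1,
      mem_setOf_eq]
  have hDgr : ∀ {y r}, (y, r) ∈ Dg → r < y ∧ q₁ < r := fun h => ⟨h.1.1.2, h.1.1.1⟩
  have hι : ∀ r y₀, (y₀, r) ∈ Dg → ∃ x, (r, x) ∈ Ig ∧ q₁ < x ∧ x ≤ y₀ := by
    intro r y₀ h0
    obtain ⟨x, hx⟩ := (hdc {y | (y, r) ∈ Dg}
      (show Def1 L M {y | (y, r) ∈ Dg} from def2_fiber_snd hDgdfn r) ⟨y₀, h0⟩).2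
      ⟨r, fun y hy => le_of_lt (hDgr hy).1⟩
    refine ⟨x, ⟨⟨y₀, h0⟩, fun y hy => hx.1 hy, fun x' hx' => hx.2 (fun y hy => hx' y hy)⟩,
      lt_of_lt_of_le (hDgr h0).2 (hx.2 (fun y hy => le_of_lt (hDgr hy).1)), hx.1 h0⟩
  -- the image of ι accumulates at q₁
  set Istar : Set M := {x | ∃ r, (r, x) ∈ Ig} with hIstardef
  have hIacc : IsAcc q₁ Istar := by
    intro a b haq hqb
    obtain ⟨xh, hxh1, hxh2⟩ := exists_between (lt_min hqb h12)
    have hxhq2 : xh < q₂ := lt_of_lt_of_le hxh2 (min_le_right _ _)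
    -- find y in (q₁, xh) with a witness
    have : ∃ y z, (q₁ < y ∧ y < xh) ∧ (z, y) ∈ Hrel := by
      by_contra hno
      push_neg at hno
      refine hH xh hxh1 hxhq2 ?_ ?_ ?_ ?_
      · exact q₁
      · exact xh
      · exact hxh1
      · intro z hzI
        exfalso
        obtain ⟨u, hu⟩ := hWdom z hzI.1 (hzI.2.trans hxhq2)
        obtain ⟨y₀, hy₀1, hy₀2⟩ := exists_between (lt_min (hWsub hu).2.1 hzI.2)
        have hy₀xh : y₀ < xh := lt_of_lt_of_le hy₀2 (min_le_right _ _)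
        have hy₀u : y₀ < u := lt_of_lt_of_le hy₀2 (min_le_left _ _)
        exact hno y₀ z ⟨hzI.1.trans hy₀1, hy₀xh⟩ ⟨⟨hzI.1, hy₀1⟩, u, hu, hy₀u⟩
    obtain ⟨y, z, ⟨hy1, hy2⟩, hzy⟩ := this
    obtain ⟨r, hr⟩ := hδ y z hzy
    obtain ⟨x, hxIg, hxq₁, hxy⟩ := hι r y hr
    exact ⟨x, ⟨r, hxIg⟩, ne_of_gt hxq₁, haq.trans hxq₁,
      lt_of_le_of_lt hxy (hy2.trans (lt_of_lt_of_le hxh2 (min_le_left _ _)))⟩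
  have hIstardfn : Def1 L M Istar := by
    refine def1_of_fm (ρ1 := ![]) (ρ2 := ![Ig]) (fun b => b.elim0)
      (fun b => by fin_cases b <;> exact hIgdfn)
      (Fm.ex (Fm.bin 0 0 1)) (fun x => ?_)
    simp only [hIstardef, Fm.realize_ex, Fm.realize_bin, Fin.cons_zero, cons_eval_1_1,
      vec1_eval0, mem_setOf_eq]
  obtain ⟨i₁, i₂, hi, hIsub⟩ := t2 hlo hIstardfn hIacc
  -- final contradiction via CORE
  refine CORE hlo hdc (E := Rh) hIgdfn hRhni (lb := q₁) (fun r hr => le_of_lt hr.1.1) ?_ ?_ hi ?_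
  · rintro e x ⟨⟨y, hy⟩, _, _⟩
    exact hy.2.1
  · rintro e x x' h h'
    exact le_antisymm (h'.2.2 x h.2.1) (h.2.2 x' h'.2.1)
  · intro x hx
    exact hIsub hx
end BOSS


section BOSSCASE
variable {L : FirstOrder.Language} {M : Type*} [L.IsOrdered] [LinearOrder M] [L.Structure M]
    [L.OrderedStructure M] [DenselyOrdered M] [NoMaxOrder M] [NoMinOrder M]
    [TopologicalSpace M] [OrderTopology M]

/-- The case where the set of selected left endpoints contains an interval. -/
lemma boss_case (hlo : LocallyOMinimal L M) (hdc : DefinablyComplete L M)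
    {Xp Zg Sg : Set (M × M)} (hXpd : Def2 L M Xp) (hZgd : Def2 L M Zg) (hSgd : Def2 L M Sg)
    {c₆ d₆ q₁ q₂ : M} (hq : q₁ < q₂)
    (hSXni : ∀ y, NoInt {x | (y, x) ∈ Xp})
    (hζfun : ∀ {x z z'}, (x, z) ∈ Zg → (x, z') ∈ Zg → z = z')
    (hσfun : ∀ {z x x'}, (z, x) ∈ Sg → (z, x') ∈ Sg → x = x')
    (hσZg : ∀ {z x}, (z, x) ∈ Sg → (x, z) ∈ Zg)
    (hcomp : ∀ {x z}, (x, z) ∈ Zg → ∃ u, z < u ∧ ∀ y', (z < y' ∧ y' < u) → (y', x) ∈ Xp)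
    (hsub : ∀ z, q₁ < z → z < q₂ → ∃ x, ((c₆ < x ∧ x < d₆) ∧ (z, x) ∈ Sg)) : False := by
  classical
  set Wrel : Set (M × M) := {p | (q₁ < p.1 ∧ p.1 < q₂) ∧ ∃ x,
    ((p.1, x) ∈ Sg ∧ (c₆ < x ∧ x < d₆)) ∧
    (((p.1 < p.2 ∧ p.2 ≤ q₂) ∧ ∀ y', (p.1 < y' ∧ y' < p.2) → (y', x) ∈ Xp) ∧
      ∀ u', ((p.1 < u' ∧ u' ≤ q₂) ∧ ∀ y', (p.1 < y' ∧ y' < u') → (y', x) ∈ Xp) → u' ≤ p.2)}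
    with hWreldef
  have hWdfn : Def2 L M Wrel := by
    refine def2_of_fm (ρ1 := ![]) (ρ2 := ![Sg, Xp]) (fun b => b.elim0)
      (fun b => by fin_cases b
                   · exact hSgd
                   · exact hXpd)
      (((Fm.gtC 0 q₁).and (Fm.ltC 0 q₂)).and (Fm.ex
        (((Fm.bin 0 1 0).and ((Fm.gtC 0 c₆).and (Fm.ltC 0 d₆))).and
          ((((Fm.lt 1 2).and (Fm.leC 2 q₂)).and
              (Fm.all (((Fm.lt 2 0).and (Fm.lt 0 3)).imp (Fm.bin 1 0 1)))).and
            (Fm.all ((((Fm.lt 2 0).and (Fm.leC 0 q₂)).and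
                (Fm.all (((Fm.lt 3 0).and (Fm.lt 0 1)).imp (Fm.bin 1 0 2)))).imp
              (Fm.le 0 3))))))) (fun z u => ?_)
    simp only [hWreldef, Fm.realize_and, Fm.realize_gtC, Fm.realize_ltC, Fm.realize_leC,
      Fm.realize_ex, Fm.realize_all, Fm.realize_imp, Fm.realize_bin, Fm.realize_lt,
      Fm.realize_le, Fin.cons_zero, cons_eval_1_1, cons_eval_2_1, cons_eval_2_2,
      cons_eval_3_1, cons_eval_3_2, cons_eval_3_3, cons_eval_4_1, cons_eval_4_2,
      cons_eval_4_3, cons_eval_4_4, vec1_eval0, vec2_eval0, vec2_eval1, mem_setOf_eq]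
  have hWdom : ∀ z, q₁ < z → z < q₂ → ∃ u, (z, u) ∈ Wrel := by
    intro z hz1 hz2
    obtain ⟨x, hxI, hzx⟩ := hsub z hz1 hz2
    obtain ⟨u₀, hzu₀, hcl⟩ := hcomp (hσZg hzx)
    set Su : Set M := {u' | (z < u' ∧ u' ≤ q₂) ∧ ∀ y', (z < y' ∧ y' < u') → (y', x) ∈ Xp}
      with hSudef
    have hSudfn : Def1 L M Su := by
      refine def1_of_fm (ρ1 := ![]) (ρ2 := ![Xp]) (fun b => b.elim0)
        (fun b => by fin_cases b <;> exact hXpd)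
        (((Fm.gtC 0 z).and (Fm.leC 0 q₂)).and
          (Fm.all (((Fm.gtC 0 z).and (Fm.lt 0 1)).imp (Fm.binCr 0 0 x)))) (fun u' => ?_)
      simp only [hSudef, Fm.realize_and, Fm.realize_gtC, Fm.realize_ltC, Fm.realize_leC,
        Fm.realize_all, Fm.realize_imp, Fm.realize_binCr, Fm.realize_lt, Fin.cons_zero,
        cons_eval_1_1, vec1_eval0, mem_setOf_eq]
    have hSune : Su.Nonempty := by
      obtain ⟨u'', hu''1, hu''2⟩ := exists_between (lt_min hzu₀ hz2)
      refine ⟨u'', ⟨hu''1, le_of_lt (lt_of_lt_of_le hu''2 (min_le_right _ _))⟩,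
        fun y' hy' => hcl y' ⟨hy'.1, lt_trans hy'.2 (lt_of_lt_of_le hu''2 (min_le_left _ _))⟩⟩
    obtain ⟨u, hu⟩ := (hdc Su hSudfn hSune).1 ⟨q₂, fun u' hu' => hu'.1.2⟩
    have huSu : u ∈ Su := by
      have hzu : z < u := lt_of_lt_of_le hSune.choose_spec.1.1 (hu.1 hSune.choose_spec)
      refine ⟨⟨hzu, ?_⟩, ?_⟩
      · exact hu.2 (fun u' hu' => hu'.1.2)
      · intro y' hy'
        have : ¬ (∀ u' ∈ Su, u' ≤ y') := fun h => absurd (hu.2 h) (not_le.2 hy'.2)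
        push_neg at this
        obtain ⟨u', hu'Su, hy'u'⟩ := this
        exact hu'Su.2 y' ⟨hy'.1, hy'u'⟩
    exact ⟨u, ⟨hz1, hz2⟩, x, ⟨hzx, hxI⟩, ⟨huSu.1, huSu.2⟩,
      fun u' hu' => hu.1 (show u' ∈ Su from hu')⟩
  have hWfun : ∀ {z u u'}, (z, u) ∈ Wrel → (z, u') ∈ Wrel → u = u' := by
    rintro z u u' ⟨_, x, ⟨hx1, _⟩, h1, h2⟩ ⟨_, x', ⟨hx1', _⟩, h1', h2'⟩
    have hxx : x = x' := hσfun hx1 hx1'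
    subst hxx
    exact le_antisymm (h2' u h1) (h2 u' h1')
  have hWsub : ∀ {z u}, (z, u) ∈ Wrel → (q₁ < z ∧ z < q₂) ∧ z < u ∧ u ≤ q₂ := by
    rintro z u ⟨hzI, x, _, ⟨⟨h1, h2⟩, _⟩, _⟩
    exact ⟨hzI, h1, h2⟩
  have hH : ∀ y, q₁ < y → y < q₂ →
      NoInt {z | (q₁ < z ∧ z < y) ∧ ∃ u, (z, u) ∈ Wrel ∧ y < u} := by
    intro y hy1 hy2 r₁ r₂ hr hrsub
    set Φy : Set (M × M) := {p | (((y, p.1) ∈ Xp) ∧ (c₆ < p.1 ∧ p.1 < d₆)) ∧ (p.1, p.2) ∈ Zg}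
      with hΦydef
    have hΦydfn : Def2 L M Φy := by
      refine def2_of_fm (ρ1 := ![]) (ρ2 := ![Xp, Zg]) (fun b => b.elim0)
        (fun b => by fin_cases b
                     · exact hXpd
                     · exact hZgd)
        (((Fm.binCl 0 0 y).and ((Fm.gtC 0 c₆).and (Fm.ltC 0 d₆))).and (Fm.bin 1 0 1))
        (fun x z => ?_)
      simp only [hΦydef, Fm.realize_and, Fm.realize_binCl, Fm.realize_gtC, Fm.realize_ltC,
        Fm.realize_bin, vec2_eval0, vec2_eval1, mem_setOf_eq]
    refine CORE hlo hdc (E := {x | (y, x) ∈ Xp ∧ (c₆ < x ∧ x < d₆)}) hΦydfn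
      (noInt_subset (fun x hx => hx.1) (hSXni y)) (lb := c₆)
      (fun x hx => le_of_lt hx.2.1) ?_ ?_ hr ?_
    · rintro e x ⟨⟨h1, h2⟩, _⟩
      exact ⟨h1, h2⟩
    · rintro e x x' ⟨_, h1⟩ ⟨_, h2⟩
      exact hζfun h1 h2
    · intro zz hzz
      obtain ⟨⟨hq₁z, hzy⟩, u, hzuW, hyu⟩ := hrsub hzz
      obtain ⟨_, x, ⟨hzxSg, hxI⟩, ⟨⟨hzu, huq₂⟩, hcov⟩, _⟩ := hzuW
      refine ⟨x, ⟨hcov y ⟨hzy, hyu⟩, hxI⟩, hσZg hzxSg⟩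
  exact BOSS hlo hdc hq hWdfn hWdom (fun h h' => hWfun h h') (fun h => hWsub h) hH

end BOSSCASE


section BRANCH
variable {L : FirstOrder.Language} {M : Type*} [L.IsOrdered] [LinearOrder M] [L.Structure M]
    [L.OrderedStructure M] [DenselyOrdered M] [NoMaxOrder M] [NoMinOrder M]
    [TopologicalSpace M] [OrderTopology M]

lemma branch_plus (hlo : LocallyOMinimal L M) (hdc : DefinablyComplete L M)
    {Xp Λ : Set (M × M)} (hXpd : Def2 L M Xp) (hΛd : Def2 L M Λ)
    (hSXni : ∀ y, NoInt {x | (y, x) ∈ Xp})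
    (hVni : ∀ z, NoInt {x | (z, x) ∈ Λ})
    (hΛxni : ∀ x, NoInt {z | (z, x) ∈ Λ})
    (hΛcomp : ∀ {z x}, (z, x) ∈ Λ → ∃ u, z < u ∧ ∀ y', (z < y' ∧ y' < u) → (y', x) ∈ Xp)
    {a₆ b₆ pb : M} (h6 : a₆ < b₆)
    (hT : ∀ x, a₆ < x → x < b₆ → ∃ z, (z, x) ∈ Λ ∧ pb ≤ z) : False := by
  classical
  set Zg : Set (M × M) := {p | (a₆ < p.1 ∧ p.1 < b₆) ∧ (((p.2, p.1) ∈ Λ ∧ pb ≤ p.2) ∧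
    ∀ z', (z', p.1) ∈ Λ → pb ≤ z' → p.2 ≤ z')} with hZgdef
  have hZgd : Def2 L M Zg := by
    refine def2_of_fm (ρ1 := ![]) (ρ2 := ![Λ]) (fun b => b.elim0)
      (fun b => by fin_cases b <;> exact hΛd)
      (((Fm.gtC 0 a₆).and (Fm.ltC 0 b₆)).and (((Fm.bin 0 1 0).and (Fm.geC 1 pb)).and
        (Fm.all ((Fm.bin 0 0 1).imp ((Fm.geC 0 pb).imp (Fm.le 2 0)))))) (fun x z => ?_)
    simp only [hZgdef, Fm.realize_and, Fm.realize_gtC, Fm.realize_ltC, Fm.realize_geC,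
      Fm.realize_bin, Fm.realize_all, Fm.realize_imp, Fm.realize_le, Fin.cons_zero,
      cons_eval_2_1, cons_eval_2_2, vec1_eval0, vec2_eval0, vec2_eval1, mem_setOf_eq]
  have hζex : ∀ x, a₆ < x → x < b₆ → ∃ z, (x, z) ∈ Zg := by
    intro x h1 h2
    set Lx : Set M := {z | (z, x) ∈ Λ ∧ pb ≤ z} with hLxdef
    have hLxd : Def1 L M Lx := by
      refine def1_of_fm (ρ1 := ![]) (ρ2 := ![Λ]) (fun b => b.elim0)
        (fun b => by fin_cases b <;> exact hΛd)
        ((Fm.binCr 0 0 x).and (Fm.geC 0 pb)) (fun z => ?_)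
      simp only [hLxdef, Fm.realize_and, Fm.realize_binCr, Fm.realize_geC, vec1_eval0,
        mem_setOf_eq]
    obtain ⟨z₀, hz₀⟩ := hT x h1 h2
    obtain ⟨z, hz⟩ := exists_least hlo hdc hLxd
      (noInt_subset (fun z hz => hz.1) (hΛxni x)) ⟨z₀, hz₀⟩ ⟨pb, fun z hz => hz.2⟩
    exact ⟨z, ⟨h1, h2⟩, ⟨hz.1.1, hz.1.2⟩, fun z' hz'1 hz'2 => hz.2 ⟨hz'1, hz'2⟩⟩
  have hζfun : ∀ {x z z'}, (x, z) ∈ Zg → (x, z') ∈ Zg → z = z' := by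
    rintro x z z' ⟨_, ⟨h1, h2⟩, h3⟩ ⟨_, ⟨h1', h2'⟩, h3'⟩
    exact le_antisymm (h3 z' h1' h2') (h3' z h1 h2)
  have hZgΛ : ∀ {x z}, (x, z) ∈ Zg → (z, x) ∈ Λ := fun h => h.2.1.1
  have hZgI : ∀ {x z}, (x, z) ∈ Zg → a₆ < x ∧ x < b₆ := fun h => h.1
  have hZgpb : ∀ {x z}, (x, z) ∈ Zg → pb ≤ z := fun h => h.2.1.2
  set Sg : Set (M × M) := {p | (p.2, p.1) ∈ Zg ∧ ∀ x', (x', p.1) ∈ Zg → p.2 ≤ x'} with hSgdef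
  have hSgd : Def2 L M Sg := by
    refine def2_of_fm (ρ1 := ![]) (ρ2 := ![Zg]) (fun b => b.elim0)
      (fun b => by fin_cases b <;> exact hZgd)
      ((Fm.bin 0 1 0).and (Fm.all ((Fm.bin 0 0 1).imp (Fm.le 2 0)))) (fun z x => ?_)
    simp only [hSgdef, Fm.realize_and, Fm.realize_bin, Fm.realize_all, Fm.realize_imp,
      Fm.realize_le, Fin.cons_zero, cons_eval_2_1, cons_eval_2_2, vec1_eval0, vec2_eval0,
      vec2_eval1, mem_setOf_eq]
  have hσex : ∀ z x₀, (x₀, z) ∈ Zg → ∃ x, (z, x) ∈ Sg := by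
    intro z x₀ h0
    obtain ⟨x, hx⟩ := exists_least hlo hdc
      (show Def1 L M {x | (x, z) ∈ Zg} from def2_fiber_snd hZgd z)
      (noInt_subset (fun x hx => hZgΛ hx) (hVni z)) ⟨x₀, h0⟩
      ⟨a₆, fun x hx => le_of_lt (hZgI hx).1⟩
    exact ⟨x, hx.1, fun x' h => hx.2 h⟩
  have hσfun : ∀ {z x x'}, (z, x) ∈ Sg → (z, x') ∈ Sg → x = x' := by
    rintro z x x' ⟨h1, h2⟩ ⟨h1', h2'⟩
    exact le_antisymm (h2 x' h1') (h2' x h1)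
  have hσZg : ∀ {z x}, (z, x) ∈ Sg → (x, z) ∈ Zg := fun h => h.1
  set P : Set M := {x | ∃ z, (z, x) ∈ Sg} with hPdef
  have hPd : Def1 L M P := by
    refine def1_of_fm (ρ1 := ![]) (ρ2 := ![Sg]) (fun b => b.elim0)
      (fun b => by fin_cases b <;> exact hSgd) (Fm.ex (Fm.bin 0 0 1)) (fun x => ?_)
    simp only [hPdef, Fm.realize_ex, Fm.realize_bin, Fin.cons_zero, cons_eval_1_1,
      vec1_eval0, mem_setOf_eq]
  have hPle : ∀ x, a₆ < x → x < b₆ → ∃ w ∈ P, w ≤ x ∧ (a₆ < w ∧ w < b₆) := by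
    intro x h1 h2
    obtain ⟨z, hz⟩ := hζex x h1 h2
    obtain ⟨w, hw⟩ := hσex z x hz
    exact ⟨w, ⟨z, hw⟩, hw.2 x hz, hZgI (hσZg hw)⟩
  have hacc : IsAcc a₆ P := by
    intro α β hα hβ
    obtain ⟨x, hx1, hx2⟩ := exists_between (lt_min hβ h6)
    obtain ⟨w, hwP, hwx, hwI⟩ := hPle x hx1 (lt_of_lt_of_le hx2 (min_le_right _ _))
    exact ⟨w, hwP, ne_of_gt hwI.1, hα.trans hwI.1,
      lt_of_le_of_lt hwx (lt_of_lt_of_le hx2 (min_le_left _ _))⟩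
  obtain ⟨c₆, d₆, h66, hP66⟩ := t2 hlo hPd hacc
  set Z' : Set M := {z | ∃ x, ((c₆ < x ∧ x < d₆) ∧ (z, x) ∈ Sg)} with hZ'def
  have hZ'd : Def1 L M Z' := by
    refine def1_of_fm (ρ1 := ![]) (ρ2 := ![Sg]) (fun b => b.elim0)
      (fun b => by fin_cases b <;> exact hSgd)
      (Fm.ex (((Fm.gtC 0 c₆).and (Fm.ltC 0 d₆)).and (Fm.bin 0 1 0))) (fun z => ?_)
    simp only [hZ'def, Fm.realize_ex, Fm.realize_and, Fm.realize_gtC, Fm.realize_ltC,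
      Fm.realize_bin, Fin.cons_zero, cons_eval_1_1, vec1_eval0, mem_setOf_eq]
  have hback : ∀ x, c₆ < x → x < d₆ → ∃ z, (z, x) ∈ Sg := fun x h1 h2 => hP66 ⟨h1, h2⟩
  by_cases hZ : ∃ q₁ q₂, q₁ < q₂ ∧ Ioo q₁ q₂ ⊆ Z'
  · obtain ⟨q₁, q₂, hq, hqs⟩ := hZ
    refine boss_case hlo hdc (c₆ := c₆) (d₆ := d₆) hXpd hZgd hSgd hq hSXni (fun h h' => hζfun h h')
      (fun h h' => hσfun h h') (fun h => hσZg h) (fun h => hΛcomp (hZgΛ h)) ?_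
    intro z h1 h2
    exact hqs ⟨h1, h2⟩
  · have hZni : NoInt Z' := by
      intro c d' h hs
      exact hZ ⟨c, d', h, hs⟩
    refine CORE hlo hdc (E := Z')
      (Φ := {p | (c₆ < p.2 ∧ p.2 < d₆) ∧ (p.1, p.2) ∈ Sg}) ?_ hZni (lb := pb) ?_ ?_ ?_ h66 ?_
    · refine def2_of_fm (ρ1 := ![]) (ρ2 := ![Sg]) (fun b => b.elim0)
        (fun b => by fin_cases b <;> exact hSgd)
        (((Fm.gtC 1 c₆).and (Fm.ltC 1 d₆)).and (Fm.bin 0 0 1)) (fun z x => ?_)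
      simp only [Fm.realize_and, Fm.realize_gtC, Fm.realize_ltC, Fm.realize_bin,
        vec1_eval0, vec2_eval0, vec2_eval1, mem_setOf_eq]
    · rintro z ⟨x, _, hx⟩
      exact hZgpb (hσZg hx)
    · rintro e x ⟨h1, h2⟩
      exact ⟨x, h1, h2⟩
    · rintro e x x' ⟨_, h1⟩ ⟨_, h2⟩
      exact hσfun h1 h2
    · intro x hx
      obtain ⟨z, hz⟩ := hback x hx.1 hx.2
      exact ⟨z, ⟨hx.1, hx.2⟩, hz⟩

lemma branch_minus (hlo : LocallyOMinimal L M) (hdc : DefinablyComplete L M)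
    {Xp Λ : Set (M × M)} (hXpd : Def2 L M Xp) (hΛd : Def2 L M Λ)
    (hSXni : ∀ y, NoInt {x | (y, x) ∈ Xp})
    (hVni : ∀ z, NoInt {x | (z, x) ∈ Λ})
    (hΛxni : ∀ x, NoInt {z | (z, x) ∈ Λ})
    (hΛcomp : ∀ {z x}, (z, x) ∈ Λ → ∃ u, z < u ∧ ∀ y', (z < y' ∧ y' < u) → (y', x) ∈ Xp)
    {a₆ b₆ pb : M} (h6 : a₆ < b₆)
    (hT : ∀ x, a₆ < x → x < b₆ → ∃ z, (z, x) ∈ Λ ∧ z ≤ pb) : False := by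
  classical
  set Zg : Set (M × M) := {p | (a₆ < p.1 ∧ p.1 < b₆) ∧ (((p.2, p.1) ∈ Λ ∧ p.2 ≤ pb) ∧
    ∀ z', (z', p.1) ∈ Λ → z' ≤ pb → z' ≤ p.2)} with hZgdef
  have hZgd : Def2 L M Zg := by
    refine def2_of_fm (ρ1 := ![]) (ρ2 := ![Λ]) (fun b => b.elim0)
      (fun b => by fin_cases b <;> exact hΛd)
      (((Fm.gtC 0 a₆).and (Fm.ltC 0 b₆)).and (((Fm.bin 0 1 0).and (Fm.leC 1 pb)).and
        (Fm.all ((Fm.bin 0 0 1).imp ((Fm.leC 0 pb).imp (Fm.le 0 2)))))) (fun x z => ?_)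
    simp only [hZgdef, Fm.realize_and, Fm.realize_gtC, Fm.realize_ltC, Fm.realize_leC,
      Fm.realize_bin, Fm.realize_all, Fm.realize_imp, Fm.realize_le, Fin.cons_zero,
      cons_eval_2_1, cons_eval_2_2, vec1_eval0, vec2_eval0, vec2_eval1, mem_setOf_eq]
  have hζex : ∀ x, a₆ < x → x < b₆ → ∃ z, (x, z) ∈ Zg := by
    intro x h1 h2
    set Lx : Set M := {z | (z, x) ∈ Λ ∧ z ≤ pb} with hLxdef
    have hLxd : Def1 L M Lx := by
      refine def1_of_fm (ρ1 := ![]) (ρ2 := ![Λ]) (fun b => b.elim0)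
        (fun b => by fin_cases b <;> exact hΛd)
        ((Fm.binCr 0 0 x).and (Fm.leC 0 pb)) (fun z => ?_)
      simp only [hLxdef, Fm.realize_and, Fm.realize_binCr, Fm.realize_leC, vec1_eval0,
        mem_setOf_eq]
    obtain ⟨z₀, hz₀⟩ := hT x h1 h2
    obtain ⟨z, hz⟩ := exists_greatest hlo hdc hLxd
      (noInt_subset (fun z hz => hz.1) (hΛxni x)) ⟨z₀, hz₀⟩ ⟨pb, fun z hz => hz.2⟩
    exact ⟨z, ⟨h1, h2⟩, ⟨hz.1.1, hz.1.2⟩, fun z' hz'1 hz'2 => hz.2 ⟨hz'1, hz'2⟩⟩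
  have hζfun : ∀ {x z z'}, (x, z) ∈ Zg → (x, z') ∈ Zg → z = z' := by
    rintro x z z' ⟨_, ⟨h1, h2⟩, h3⟩ ⟨_, ⟨h1', h2'⟩, h3'⟩
    exact le_antisymm (h3' z h1 h2) (h3 z' h1' h2')
  have hZgΛ : ∀ {x z}, (x, z) ∈ Zg → (z, x) ∈ Λ := fun h => h.2.1.1
  have hZgI : ∀ {x z}, (x, z) ∈ Zg → a₆ < x ∧ x < b₆ := fun h => h.1
  have hZgpb : ∀ {x z}, (x, z) ∈ Zg → z ≤ pb := fun h => h.2.1.2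
  set Sg : Set (M × M) := {p | (p.2, p.1) ∈ Zg ∧ ∀ x', (x', p.1) ∈ Zg → p.2 ≤ x'} with hSgdef
  have hSgd : Def2 L M Sg := by
    refine def2_of_fm (ρ1 := ![]) (ρ2 := ![Zg]) (fun b => b.elim0)
      (fun b => by fin_cases b <;> exact hZgd)
      ((Fm.bin 0 1 0).and (Fm.all ((Fm.bin 0 0 1).imp (Fm.le 2 0)))) (fun z x => ?_)
    simp only [hSgdef, Fm.realize_and, Fm.realize_bin, Fm.realize_all, Fm.realize_imp,
      Fm.realize_le, Fin.cons_zero, cons_eval_2_1, cons_eval_2_2, vec1_eval0, vec2_eval0,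
      vec2_eval1, mem_setOf_eq]
  have hσex : ∀ z x₀, (x₀, z) ∈ Zg → ∃ x, (z, x) ∈ Sg := by
    intro z x₀ h0
    obtain ⟨x, hx⟩ := exists_least hlo hdc
      (show Def1 L M {x | (x, z) ∈ Zg} from def2_fiber_snd hZgd z)
      (noInt_subset (fun x hx => hZgΛ hx) (hVni z)) ⟨x₀, h0⟩
      ⟨a₆, fun x hx => le_of_lt (hZgI hx).1⟩
    exact ⟨x, hx.1, fun x' h => hx.2 h⟩
  have hσfun : ∀ {z x x'}, (z, x) ∈ Sg → (z, x') ∈ Sg → x = x' := by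
    rintro z x x' ⟨h1, h2⟩ ⟨h1', h2'⟩
    exact le_antisymm (h2 x' h1') (h2' x h1)
  have hσZg : ∀ {z x}, (z, x) ∈ Sg → (x, z) ∈ Zg := fun h => h.1
  set P : Set M := {x | ∃ z, (z, x) ∈ Sg} with hPdef
  have hPd : Def1 L M P := by
    refine def1_of_fm (ρ1 := ![]) (ρ2 := ![Sg]) (fun b => b.elim0)
      (fun b => by fin_cases b <;> exact hSgd) (Fm.ex (Fm.bin 0 0 1)) (fun x => ?_)
    simp only [hPdef, Fm.realize_ex, Fm.realize_bin, Fin.cons_zero, cons_eval_1_1,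
      vec1_eval0, mem_setOf_eq]
  have hPle : ∀ x, a₆ < x → x < b₆ → ∃ w ∈ P, w ≤ x ∧ (a₆ < w ∧ w < b₆) := by
    intro x h1 h2
    obtain ⟨z, hz⟩ := hζex x h1 h2
    obtain ⟨w, hw⟩ := hσex z x hz
    exact ⟨w, ⟨z, hw⟩, hw.2 x hz, hZgI (hσZg hw)⟩
  have hacc : IsAcc a₆ P := by
    intro α β hα hβ
    obtain ⟨x, hx1, hx2⟩ := exists_between (lt_min hβ h6)
    obtain ⟨w, hwP, hwx, hwI⟩ := hPle x hx1 (lt_of_lt_of_le hx2 (min_le_right _ _))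
    exact ⟨w, hwP, ne_of_gt hwI.1, hα.trans hwI.1,
      lt_of_le_of_lt hwx (lt_of_lt_of_le hx2 (min_le_left _ _))⟩
  obtain ⟨c₆, d₆, h66, hP66⟩ := t2 hlo hPd hacc
  set Z' : Set M := {z | ∃ x, ((c₆ < x ∧ x < d₆) ∧ (z, x) ∈ Sg)} with hZ'def
  have hZ'd : Def1 L M Z' := by
    refine def1_of_fm (ρ1 := ![]) (ρ2 := ![Sg]) (fun b => b.elim0)
      (fun b => by fin_cases b <;> exact hSgd)
      (Fm.ex (((Fm.gtC 0 c₆).and (Fm.ltC 0 d₆)).and (Fm.bin 0 1 0))) (fun z => ?_)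
    simp only [hZ'def, Fm.realize_ex, Fm.realize_and, Fm.realize_gtC, Fm.realize_ltC,
      Fm.realize_bin, Fin.cons_zero, cons_eval_1_1, vec1_eval0, mem_setOf_eq]
  have hback : ∀ x, c₆ < x → x < d₆ → ∃ z, (z, x) ∈ Sg := fun x h1 h2 => hP66 ⟨h1, h2⟩
  by_cases hZ : ∃ q₁ q₂, q₁ < q₂ ∧ Ioo q₁ q₂ ⊆ Z'
  · obtain ⟨q₁, q₂, hq, hqs⟩ := hZ
    refine boss_case hlo hdc (c₆ := c₆) (d₆ := d₆) hXpd hZgd hSgd hq hSXni (fun h h' => hζfun h h')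
      (fun h h' => hσfun h h') (fun h => hσZg h) (fun h => hΛcomp (hZgΛ h)) ?_
    intro z h1 h2
    exact hqs ⟨h1, h2⟩
  · have hZni : NoInt Z' := by
      intro c d' h hs
      exact hZ ⟨c, d', h, hs⟩
    refine COREm hlo hdc (E := Z')
      (Φ := {p | (c₆ < p.2 ∧ p.2 < d₆) ∧ (p.1, p.2) ∈ Sg}) ?_ hZni (ub := pb) ?_ ?_ ?_ h66 ?_
    · refine def2_of_fm (ρ1 := ![]) (ρ2 := ![Sg]) (fun b => b.elim0)
        (fun b => by fin_cases b <;> exact hSgd)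
        (((Fm.gtC 1 c₆).and (Fm.ltC 1 d₆)).and (Fm.bin 0 0 1)) (fun z x => ?_)
      simp only [Fm.realize_and, Fm.realize_gtC, Fm.realize_ltC, Fm.realize_bin,
        vec1_eval0, vec2_eval0, vec2_eval1, mem_setOf_eq]
    · rintro z ⟨x, _, hx⟩
      exact hZgpb (hσZg hx)
    · rintro e x ⟨h1, h2⟩
      exact ⟨x, h1, h2⟩
    · rintro e x x' ⟨_, h1⟩ ⟨_, h2⟩
      exact hσfun h1 h2
    · intro x hx
      obtain ⟨z, hz⟩ := hback x hx.1 hx.2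
      exact ⟨z, ⟨hx.1, hx.2⟩, hz⟩

end BRANCH


section MAINSEC
variable {L : FirstOrder.Language} {M : Type*} [L.IsOrdered] [LinearOrder M] [L.Structure M]
    [L.OrderedStructure M] [DenselyOrdered M] [NoMaxOrder M] [NoMinOrder M]
    [TopologicalSpace M] [OrderTopology M]

/-- The locally-constant locus, in explicit first-order form. -/
def XpS (Γ : Set (M × M)) : Set (M × M) :=
  {p | (p.1, p.2) ∈ Γ ∧ ∃ y₁, ∃ y₂, ∃ x₁, ∃ x₂,
    ((y₁ < p.1 ∧ p.1 < y₂) ∧ ((x₁ < p.2 ∧ p.2 < x₂) ∧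
      ((∀ y', (y₁ < y' ∧ y' < y₂) → (y', p.2) ∈ Γ) ∧
        (∀ y', ∀ x', (y₁ < y' ∧ y' < y₂) →
          ((x₁ < x' ∧ x' < x₂) → ((y', x') ∈ Γ → x' = p.2))))))}

lemma XpS_sub {Γ : Set (M × M)} : XpS Γ ⊆ Γ := fun _ hp => hp.1

lemma XpS_box {Γ : Set (M × M)} {y x : M} (h : (y, x) ∈ XpS Γ) :
    ∃ y₁ y₂ x₁ x₂, ((y₁ < y ∧ y < y₂) ∧ (x₁ < x ∧ x < x₂)) ∧
      (∀ y', (y₁ < y' ∧ y' < y₂) → (y', x) ∈ XpS Γ) ∧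
      (∀ y' x', (y₁ < y' ∧ y' < y₂) → (x₁ < x' ∧ x' < x₂) → (y', x') ∈ XpS Γ → x' = x) := by
  obtain ⟨hΓ, y₁, y₂, x₁, x₂, hA, hB, hC, hD⟩ := h
  refine ⟨y₁, y₂, x₁, x₂, ⟨hA, hB⟩, ?_, ?_⟩
  · intro y' hy'
    exact ⟨hC y' hy', y₁, y₂, x₁, x₂, hy', hB, hC, hD⟩
  · intro y' x' h1 h2 h3
    exact hD y' x' h1 h2 h3.1

lemma XpS_def2 {Γ : Set (M × M)} (hΓ : Def2 L M Γ) : Def2 L M (XpS Γ) := by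
  refine def2_of_fm (ρ1 := ![]) (ρ2 := ![Γ]) (fun b => b.elim0)
    (fun b => by fin_cases b <;> exact hΓ)
    ((Fm.bin 0 0 1).and (Fm.ex (Fm.ex (Fm.ex (Fm.ex (
      ((Fm.lt 3 4).and (Fm.lt 4 2)).and (
        ((Fm.lt 1 5).and (Fm.lt 5 0)).and (
          (Fm.all (((Fm.lt 4 0).and (Fm.lt 0 3)).imp (Fm.bin 0 0 6))).and
          (Fm.all (Fm.all (((Fm.lt 5 1).and (Fm.lt 1 4)).imp
            (((Fm.lt 3 0).and (Fm.lt 0 2)).imp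
              ((Fm.bin 0 1 0).imp (Fm.eq 0 7)))))))))))))) (fun y x => ?_)
  simp only [XpS, Fm.realize_and, Fm.realize_bin, Fm.realize_ex, Fm.realize_all,
    Fm.realize_imp, Fm.realize_lt, Fm.realize_eq, Fin.cons_zero,
    cons_eval_1_1, cons_eval_2_1, cons_eval_2_2, cons_eval_3_1, cons_eval_3_2, cons_eval_3_3,
    cons_eval_4_1, cons_eval_4_2, cons_eval_4_3, cons_eval_4_4,
    cons_eval_5_1, cons_eval_5_2, cons_eval_5_3, cons_eval_5_4, cons_eval_5_5,
    cons_eval_6_1, cons_eval_6_2, cons_eval_6_3, cons_eval_6_4, cons_eval_6_5, cons_eval_6_6,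
    cons_eval_7_1, cons_eval_7_2, cons_eval_7_3, cons_eval_7_4, cons_eval_7_5, cons_eval_7_6,
    cons_eval_7_7, vec1_eval0, vec2_eval0, vec2_eval1, mem_setOf_eq]

lemma main_noInt (hlo : LocallyOMinimal L M) (hdc : DefinablyComplete L M)
    {Γ : Set (M × M)} (hΓ : Def2 L M Γ)
    (hfib : ∀ y : M, Paper.IsDiscrete {x : M | (y, x) ∈ Γ}) :
    NoInt {x | ∃ y, (y, x) ∈ XpS Γ} := by
  classical
  intro a b hab hsub
  have hXpd : Def2 L M (XpS Γ) := XpS_def2 hΓ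
  have hSXni : ∀ y, NoInt {x | (y, x) ∈ XpS Γ} := fun y =>
    noInt_subset (fun x hx => (XpS_sub hx : (y, x) ∈ Γ)) (noInt_discrete (hfib y))
  -- the set of x whose section extends to -∞
  set Binf : Set M := {x | (a < x ∧ x < b) ∧ ∃ u, ∀ y', y' < u → (y', x) ∈ XpS Γ} with hBdef
  have hBd : Def1 L M Binf := by
    refine def1_of_fm (ρ1 := ![]) (ρ2 := ![XpS Γ]) (fun b' => b'.elim0)
      (fun b' => by fin_cases b' <;> exact hXpd)
      (((Fm.gtC 0 a).and (Fm.ltC 0 b)).and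
        (Fm.ex (Fm.all ((Fm.lt 0 1).imp (Fm.bin 0 0 2))))) (fun x => ?_)
    simp only [hBdef, Fm.realize_and, Fm.realize_gtC, Fm.realize_ltC, Fm.realize_ex,
      Fm.realize_all, Fm.realize_imp, Fm.realize_lt, Fm.realize_bin, Fin.cons_zero,
      cons_eval_1_1, cons_eval_2_1, cons_eval_2_2, vec1_eval0, mem_setOf_eq]
  have hBni : NoInt Binf := by
    intro c d hcd hcds
    set RB : Set (M × M) := {p | (c < p.2 ∧ p.2 < d) ∧
      ∀ y', y' < p.1 → (y', p.2) ∈ XpS Γ} with hRBdef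
    have hRBd : Def2 L M RB := by
      refine def2_of_fm (ρ1 := ![]) (ρ2 := ![XpS Γ]) (fun b' => b'.elim0)
        (fun b' => by fin_cases b' <;> exact hXpd)
        (((Fm.gtC 1 c).and (Fm.ltC 1 d)).and
          (Fm.all ((Fm.lt 0 1).imp (Fm.bin 0 0 2)))) (fun t x => ?_)
      simp only [hRBdef, Fm.realize_and, Fm.realize_gtC, Fm.realize_ltC, Fm.realize_all,
        Fm.realize_imp, Fm.realize_lt, Fm.realize_bin, Fin.cons_zero, cons_eval_2_1,
        cons_eval_2_2, vec1_eval0, vec2_eval0, vec2_eval1, mem_setOf_eq]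
    refine KL hlo hdc hRBd hcd ?_ ?_ ?_ ?_
    · rintro t x ⟨h1, _⟩; exact h1
    · intro t
      obtain ⟨y₀, hy₀⟩ := exists_lt t
      exact noInt_subset (fun x hx => hx.2 y₀ hy₀) (hSXni y₀)
    · rintro t t' htt _ x ⟨h1, h2⟩
      exact ⟨h1, fun y' hy' => h2 y' (lt_of_lt_of_le hy' htt)⟩
    · intro x hx
      obtain ⟨_, u, hu⟩ := hcds hx
      exact ⟨u, ⟨hx.1, hx.2⟩, hu⟩
  obtain ⟨a₅, b₅, h5, h5sub, h5av⟩ := sub_avoid hlo hBd hBni hab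
  -- the left-endpoint relation
  set Lam : Set (M × M) := {p | ((a < p.2 ∧ p.2 < b) ∧ ¬ ((p.1, p.2) ∈ XpS Γ)) ∧
    ∃ u, p.1 < u ∧ ∀ y', (p.1 < y' ∧ y' < u) → (y', p.2) ∈ XpS Γ} with hLamdef
  have hLamd : Def2 L M Lam := by
    refine def2_of_fm (ρ1 := ![]) (ρ2 := ![XpS Γ]) (fun b' => b'.elim0)
      (fun b' => by fin_cases b' <;> exact hXpd)
      ((((Fm.gtC 1 a).and (Fm.ltC 1 b)).and (Fm.not (Fm.bin 0 0 1))).and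
        (Fm.ex ((Fm.lt 1 0).and (Fm.all (((Fm.lt 2 0).and (Fm.lt 0 1)).imp
          (Fm.bin 0 0 3)))))) (fun z x => ?_)
    simp only [hLamdef, Fm.realize_and, Fm.realize_gtC, Fm.realize_ltC, Fm.realize_not,
      Fm.realize_bin, Fm.realize_ex, Fm.realize_all, Fm.realize_imp, Fm.realize_lt,
      Fin.cons_zero, cons_eval_2_1, cons_eval_2_2, cons_eval_3_1, cons_eval_3_2, cons_eval_3_3,
      vec1_eval0, vec2_eval0, vec2_eval1, mem_setOf_eq]
  have hΛxni : ∀ x, NoInt {z | (z, x) ∈ Lam} := by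
    intro x r₁ r₂ hr hrs
    obtain ⟨z, hz⟩ := nonempty_Ioo.2 hr
    obtain ⟨⟨_, hzX⟩, u, hzu, hcl⟩ := hrs hz
    obtain ⟨z', h1, h2⟩ := exists_between (lt_min hzu hz.2)
    have hz'Λ := hrs ⟨hz.1.trans h1, lt_of_lt_of_le h2 (min_le_right _ _)⟩
    exact hz'Λ.1.2 (hcl z' ⟨h1, lt_of_lt_of_le h2 (min_le_left _ _)⟩)
  have hΛcomp : ∀ {z x}, (z, x) ∈ Lam →
      ∃ u, z < u ∧ ∀ y', (z < y' ∧ y' < u) → (y', x) ∈ XpS Γ := fun h => h.2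
  have hΛtot : ∀ x, a₅ < x → x < b₅ → ∃ z, (z, x) ∈ Lam := by
    intro x h1 h2
    have hxab : x ∈ Ioo a b := h5sub ⟨h1, h2⟩
    have hxB : x ∉ Binf := h5av x ⟨h1, h2⟩
    obtain ⟨y, hy⟩ : ∃ y, (y, x) ∈ XpS Γ := hsub hxab
    obtain ⟨y₁, y₂, x₁, x₂, ⟨⟨hy₁, hy₂⟩, hBx⟩, hCx, hDx⟩ := XpS_box hy
    set D : Set M := {z | z < y ∧ ∀ y'', (z < y'' ∧ y'' ≤ y) → (y'', x) ∈ XpS Γ} with hDdef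
    have hDd : Def1 L M D := by
      refine def1_of_fm (ρ1 := ![]) (ρ2 := ![XpS Γ]) (fun b' => b'.elim0)
        (fun b' => by fin_cases b' <;> exact hXpd)
        ((Fm.ltC 0 y).and (Fm.all (((Fm.lt 1 0).and (Fm.leC 0 y)).imp
          (Fm.binCr 0 0 x)))) (fun z => ?_)
      simp only [hDdef, Fm.realize_and, Fm.realize_ltC, Fm.realize_leC, Fm.realize_all,
        Fm.realize_imp, Fm.realize_lt, Fm.realize_binCr, Fin.cons_zero, cons_eval_1_1,
        vec1_eval0, mem_setOf_eq]
    have hy₁D : y₁ ∈ D :=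
      ⟨hy₁, fun y'' h => hCx y'' ⟨h.1, lt_of_le_of_lt h.2 hy₂⟩⟩
    have hDbdd : BddBelow D := by
      by_contra hnb
      apply hxB
      refine ⟨⟨hxab.1, hxab.2⟩, y, fun y' hy' => ?_⟩
      rw [not_bddBelow_iff] at hnb
      obtain ⟨z', hz'D, hz'⟩ := hnb y'
      exact hz'D.2 y' ⟨hz', le_of_lt hy'⟩
    obtain ⟨zs, hzs⟩ := (hdc D hDd ⟨y₁, hy₁D⟩).2 hDbdd
    have hzsy : zs < y := lt_of_le_of_lt (hzs.1 hy₁D) hy₁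
    have hIoc : ∀ y'', zs < y'' → y'' ≤ y → (y'', x) ∈ XpS Γ := by
      intro y'' hz hle
      have hnlb : ¬ (y'' ∈ lowerBounds D) := fun h => absurd (hzs.2 h) (not_le.2 hz)
      obtain ⟨z', hz'D, hz'⟩ : ∃ z' ∈ D, z' < y'' := by
        by_contra h; push_neg at h; exact hnlb (fun z' hz' => (h z' hz'))
      exact hz'D.2 y'' ⟨hz', hle⟩
    have hzsX : ¬ ((zs, x) ∈ XpS Γ) := by
      intro hmem
      obtain ⟨w₁, w₂, v₁, v₂, ⟨⟨hw₁, hw₂⟩, _⟩, hCw, _⟩ := XpS_box hmem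
      obtain ⟨z', hz'1, hz'2⟩ := exists_between hw₁
      have hz'D : z' ∈ D := by
        refine ⟨hz'2.trans hzsy, fun y'' h => ?_⟩
        rcases le_or_gt y'' zs with hc | hc
        · exact hCw y'' ⟨hz'1.trans h.1, lt_of_le_of_lt hc hw₂⟩
        · exact hIoc y'' hc h.2
      exact absurd (hzs.1 hz'D) (not_le.2 hz'2)
    exact ⟨zs, ⟨⟨hxab.1, hxab.2⟩, hzsX⟩, y, hzsy, fun y' h => hIoc y' h.1 (le_of_lt h.2)⟩
  by_cases hα : ∃ z c d', c < d' ∧ Ioo c d' ⊆ {x | (z, x) ∈ Lam}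
  · obtain ⟨z, c, d', hcd', hVs⟩ := hα
    set RV : Set (M × M) := {p | (c < p.2 ∧ p.2 < d') ∧ (z < p.1 ∧
      ∀ y', (z < y' ∧ y' < p.1) → (y', p.2) ∈ XpS Γ)} with hRVdef
    have hRVd : Def2 L M RV := by
      refine def2_of_fm (ρ1 := ![]) (ρ2 := ![XpS Γ]) (fun b' => b'.elim0)
        (fun b' => by fin_cases b' <;> exact hXpd)
        (((Fm.gtC 1 c).and (Fm.ltC 1 d')).and ((Fm.gtC 0 z).and
          (Fm.all (((Fm.gtC 0 z).and (Fm.lt 0 1)).imp (Fm.bin 0 0 2))))) (fun t x => ?_)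
      simp only [hRVdef, Fm.realize_and, Fm.realize_gtC, Fm.realize_ltC, Fm.realize_all,
        Fm.realize_imp, Fm.realize_lt, Fm.realize_bin, Fin.cons_zero, cons_eval_2_1,
        cons_eval_2_2, vec1_eval0, vec2_eval0, vec2_eval1, mem_setOf_eq]
    refine KL hlo hdc hRVd hcd' ?_ ?_ ?_ ?_
    · rintro t x ⟨h1, _⟩; exact h1
    · intro t
      rcases lt_or_ge z t with hzt | hzt
      · obtain ⟨y₀, hy₀1, hy₀2⟩ := exists_between hzt
        exact noInt_subset (fun x hx => hx.2.2 y₀ ⟨hy₀1, hy₀2⟩) (hSXni y₀)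
      · exact noInt_subset (fun x hx => absurd hx.2.1 (not_lt.2 hzt)) noInt_empty
    · rintro t t' htt ⟨x₀, hx₀⟩ x ⟨h1, h2, h3⟩
      exact ⟨h1, hx₀.2.1, fun y' h => h3 y' ⟨h.1, lt_of_lt_of_le h.2 htt⟩⟩
    · intro x hx
      obtain ⟨_, u, hzu, hcl⟩ := hVs hx
      exact ⟨u, ⟨hx.1, hx.2⟩, hzu, hcl⟩
  · push_neg at hα
    have hVni : ∀ z, NoInt {x | (z, x) ∈ Lam} := by
      intro z c d' h hs
      exact absurd hs (hα z c d' h)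
    set Tp : Set M := {x | (a₅ < x ∧ x < b₅) ∧ ∃ z, (z, x) ∈ Lam ∧ a ≤ z} with hTpdef
    have hTpd : Def1 L M Tp := by
      refine def1_of_fm (ρ1 := ![]) (ρ2 := ![Lam]) (fun b' => b'.elim0)
        (fun b' => by fin_cases b' <;> exact hLamd)
        (((Fm.gtC 0 a₅).and (Fm.ltC 0 b₅)).and
          (Fm.ex ((Fm.bin 0 0 1).and (Fm.geC 0 a)))) (fun x => ?_)
      simp only [hTpdef, Fm.realize_and, Fm.realize_gtC, Fm.realize_ltC, Fm.realize_geC,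
        Fm.realize_ex, Fm.realize_bin, Fin.cons_zero, cons_eval_1_1, vec1_eval0, mem_setOf_eq]
    by_cases hTpint : ∃ a₆ b₆, a₆ < b₆ ∧ Ioo a₆ b₆ ⊆ Tp
    · obtain ⟨a₆, b₆, h6, h6s⟩ := hTpint
      refine branch_plus hlo hdc (pb := a) hXpd hLamd hSXni hVni hΛxni (fun h => hΛcomp h) h6 ?_
      intro x hx1 hx2
      exact (h6s ⟨hx1, hx2⟩).2
    · have hTpni : NoInt Tp := fun c d' h hs => hTpint ⟨c, d', h, hs⟩
      obtain ⟨a₆, b₆, h6, h6sub, h6av⟩ := sub_avoid hlo hTpd hTpni h5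
      refine branch_minus hlo hdc (pb := a) hXpd hLamd hSXni hVni hΛxni (fun h => hΛcomp h) h6 ?_
      intro x hx1 hx2
      have hx5 : x ∈ Ioo a₅ b₅ := h6sub ⟨hx1, hx2⟩
      obtain ⟨z, hz⟩ := hΛtot x hx5.1 hx5.2
      refine ⟨z, hz, ?_⟩
      by_contra hle
      exact h6av x ⟨hx1, hx2⟩ ⟨⟨hx5.1, hx5.2⟩, z, hz, le_of_lt (not_le.1 hle)⟩

end MAINSEC


section FINAL
variable {L : FirstOrder.Language} {M : Type*} [L.IsOrdered] [LinearOrder M] [L.Structure M]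
    [L.OrderedStructure M] [DenselyOrdered M] [NoMaxOrder M] [NoMinOrder M]
    [TopologicalSpace M] [OrderTopology M]

lemma image_snd_XpS {Γ : Set (M × M)} :
    Prod.snd '' (XpS Γ) = {x | ∃ y, (y, x) ∈ XpS Γ} := by
  ext x
  constructor
  · rintro ⟨p, hp, rfl⟩
    exact ⟨p.1, hp⟩
  · rintro ⟨y, hy⟩
    exact ⟨(y, x), hy, rfl⟩

lemma thmset_eq {Γ : Set (M × M)} :
    {p : M × M | p ∈ Γ ∧ ∃ I J : Set M, IsOInterval I ∧ IsOInterval J ∧ p.1 ∈ I ∧ p.2 ∈ J ∧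
      ∃ c : M, (I ×ˢ J) ∩ Γ = I ×ˢ {c}} = XpS Γ := by
  ext p
  constructor
  · rintro ⟨hpΓ, I, J, hIo, hJo, hpI, hpJ, c, heq⟩
    have hpc : p.2 = c := by
      have hmem : p ∈ I ×ˢ ({c} : Set M) := heq ▸ (⟨⟨hpI, hpJ⟩, hpΓ⟩ : p ∈ (I ×ˢ J) ∩ Γ)
      simpa using hmem.2
    obtain ⟨y₁, y₂, hy₁, hy₂, hIsub⟩ := oint_sub_Ioo hIo hpI
    obtain ⟨x₁, x₂, hx₁, hx₂, hJsub⟩ := oint_sub_Ioo hJo hpJ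
    refine ⟨hpΓ, y₁, y₂, x₁, x₂, ⟨hy₁, hy₂⟩, ⟨hx₁, hx₂⟩, ?_, ?_⟩
    · intro y' hy'
      have h1 : (y', c) ∈ I ×ˢ ({c} : Set M) := ⟨hIsub ⟨hy'.1, hy'.2⟩, rfl⟩
      rw [← heq] at h1
      rw [hpc]
      exact h1.2
    · intro y' x' h1 h2 h3
      have hmem : (y', x') ∈ (I ×ˢ J) ∩ Γ :=
        ⟨⟨hIsub ⟨h1.1, h1.2⟩, hJsub ⟨h2.1, h2.2⟩⟩, h3⟩
      rw [heq] at hmem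
      have : x' = c := by simpa using hmem.2
      rw [hpc]
      exact this
  · rintro ⟨hpΓ, y₁, y₂, x₁, x₂, ⟨hy₁, hy₂⟩, ⟨hx₁, hx₂⟩, hC, hD⟩
    refine ⟨hpΓ, Ioo y₁ y₂, Ioo x₁ x₂, Or.inl ⟨y₁, y₂, rfl⟩, Or.inl ⟨x₁, x₂, rfl⟩,
      ⟨hy₁, hy₂⟩, ⟨hx₁, hx₂⟩, p.2, ?_⟩
    ext q
    simp only [mem_inter_iff, mem_prod, mem_Ioo, mem_singleton_iff]
    constructor
    · rintro ⟨⟨hqI, hqJ⟩, hqΓ⟩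
      exact ⟨hqI, hD q.1 q.2 hqI hqJ hqΓ⟩
    · rintro ⟨hqI, hqc⟩
      have hΓq : (q.1, p.2) ∈ Γ := hC q.1 hqI
      have hq : q = (q.1, p.2) := by rw [← hqc]
      exact ⟨⟨hqI, by rw [hqc]; exact ⟨hx₁, hx₂⟩⟩, hq ▸ hΓq⟩

lemma main_discrete_closed (hlo : LocallyOMinimal L M) (hdc : DefinablyComplete L M)
    {Γ : Set (M × M)} (hΓ : Def2 L M Γ)
    (hfib : ∀ y : M, Paper.IsDiscrete {x : M | (y, x) ∈ Γ}) :
    Paper.IsDiscrete {x | ∃ y, (y, x) ∈ XpS Γ} ∧ IsClosed {x | ∃ y, (y, x) ∈ XpS Γ} := by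
  have hXpd : Def2 L M (XpS Γ) := XpS_def2 hΓ
  set A : Set M := {x | ∃ y, (y, x) ∈ XpS Γ} with hAdef
  have hAd : Def1 L M A := by
    refine def1_of_fm (ρ1 := ![]) (ρ2 := ![XpS Γ]) (fun b' => b'.elim0)
      (fun b' => by fin_cases b' <;> exact hXpd) (Fm.ex (Fm.bin 0 0 1)) (fun x => ?_)
    simp only [hAdef, Fm.realize_ex, Fm.realize_bin, Fin.cons_zero, cons_eval_1_1,
      vec1_eval0, mem_setOf_eq]
  have hAni : NoInt A := main_noInt hlo hdc hΓ hfib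
  constructor
  · intro x hx
    obtain ⟨a₀, b₀, ha₀, hb₀, hcl⟩ := not_acc_elim (noAcc hlo hAd hAni x)
    refine ⟨Ioo a₀ b₀, isOpen_Ioo, ⟨ha₀, hb₀⟩, ?_⟩
    ext w
    constructor
    · rintro ⟨hw1, hw2⟩
      exact hcl w hw2 hw1.1 hw1.2
    · rintro rfl
      exact ⟨⟨ha₀, hb₀⟩, hx⟩
  · refine isClosed_of_closure_subset (fun x hx => ?_)
    by_contra hxA
    refine absurd ?_ (noAcc hlo hAd hAni x)
    intro α β hα hβ
    obtain ⟨w, hw⟩ := (mem_closure_iff.1 hx) (Ioo α β) isOpen_Ioo ⟨hα, hβ⟩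
    exact ⟨w, hw.2, fun h => hxA (h ▸ hw.2), hw.1.1, hw.1.2⟩

end FINAL

end PaperProof

/-- In a definably complete locally o-minimal structure, let `Γ ⊆ M²` be a definable set
all of whose vertical fibers are discrete, and let `X` be the set of points of `Γ` having
an open box neighborhood meeting `Γ` in the graph of a constant function. Then the
projection of `X` to the second coordinate is discrete and closed. -/
theorem snd_proj_of_locally_constant_part_discrete_closed
    {L : FirstOrder.Language} {M : Type*} [L.IsOrdered] [LinearOrder M] [L.Structure M]
    [L.OrderedStructure M] [DenselyOrdered M] [NoMaxOrder M] [NoMinOrder M]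
    [TopologicalSpace M] [OrderTopology M]
    (hlo : LocallyOMinimal L M) (hdc : DefinablyComplete L M)
    (Γ : Set (M × M)) (hΓ : Def2 L M Γ)
    (hfib : ∀ y : M, Paper.IsDiscrete {x : M | (y, x) ∈ Γ}) :
    Paper.IsDiscrete (Prod.snd '' {p : M × M | p ∈ Γ ∧
      ∃ I J : Set M, IsOInterval I ∧ IsOInterval J ∧ p.1 ∈ I ∧ p.2 ∈ J ∧
        ∃ c : M, (I ×ˢ J) ∩ Γ = I ×ˢ {c}}) ∧
    IsClosed (Prod.snd '' {p : M × M | p ∈ Γ ∧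
      ∃ I J : Set M, IsOInterval I ∧ IsOInterval J ∧ p.1 ∈ I ∧ p.2 ∈ J ∧
        ∃ c : M, (I ×ˢ J) ∩ Γ = I ×ˢ {c}}) := by
  rw [PaperProof.thmset_eq, PaperProof.image_snd_XpS]
  exact PaperProof.main_discrete_closed hlo hdc hΓ hfib
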